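/- arXiv:1105.4954 — 4 statements merged into one kernel-verified Lean document; each statement's English description precedes it below -/
import Mathlib

section
/- Let d ≥ 1, λ ∈ ℝ, c ∈ ℝ^d, let σ be a positive integer, and let u₀ : ℝ^d → ℂ be differentiable. Define u(t,x) := u₀(x + t·c)·exp(−i·λ·t·|u₀(x + t·c)|^(2σ)). Then u(0,x) = u₀(x) for all x, and u satisfies i·∂_t u(t,x) − i·(c·∇_x u)(t,x) = λ·|u(t,x)|^(2σ)·u(t,x) for every (t,x), where c·∇_x u = Σ_{j=1}^d c_j ∂_{x_j} u. -/
theorem transport_explicit_solution (d : ℕ) (hd : 1 ≤ d) (lam : ℝ) (σ : ℕ) (hσ : 1 ≤ σ)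
    (c : EuclideanSpace ℝ (Fin d))
    (u₀ : EuclideanSpace ℝ (Fin d) → ℂ) (hu₀ : Differentiable ℝ u₀)
    (u : ℝ × EuclideanSpace ℝ (Fin d) → ℂ)
    (hu : ∀ p : ℝ × EuclideanSpace ℝ (Fin d),
      u p = u₀ (p.2 + p.1 • c) *
        Complex.exp (-Complex.I * (lam : ℂ) * (p.1 : ℂ)
          * ((‖u₀ (p.2 + p.1 • c)‖ ^ (2 * σ) : ℝ) : ℂ))) :
    (∀ x : EuclideanSpace ℝ (Fin d), u (0, x) = u₀ x) ∧
    ∀ (t : ℝ) (x : EuclideanSpace ℝ (Fin d)),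
      Complex.I * fderiv ℝ u (t, x) ((1 : ℝ), (0 : EuclideanSpace ℝ (Fin d)))
        - Complex.I * ∑ j : Fin d, (c j : ℂ) *
            fderiv ℝ u (t, x) ((0 : ℝ), EuclideanSpace.single j (1 : ℝ))
        = (lam : ℂ) * ((‖u (t, x)‖ ^ (2 * σ) : ℝ) : ℂ) * u (t, x) := by
  have hnormSq : Differentiable ℝ Complex.normSq := by
    have : (Complex.normSq : ℂ → ℝ) = fun z => z.re * z.re + z.im * z.im := by
      funext w; exact Complex.normSq_apply w
    rw [this]
    exact (Complex.reCLM.differentiable.mul Complex.reCLM.differentiable).add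
      (Complex.imCLM.differentiable.mul Complex.imCLM.differentiable)
  have habs : ∀ z : ℂ, (‖z‖) ^ (2 * σ) = Complex.normSq z ^ σ := fun z => by
    rw [pow_mul, Complex.sq_norm]
  refine ⟨fun x => by rw [hu (0, x)]; simp, fun t x => ?_⟩
  set p : ℝ × EuclideanSpace ℝ (Fin d) := (t, x) with hp
  set W : ℝ × EuclideanSpace ℝ (Fin d) →L[ℝ] EuclideanSpace ℝ (Fin d) :=
    (ContinuousLinearMap.snd ℝ ℝ _) + (ContinuousLinearMap.fst ℝ ℝ _).smulRight c with hWdef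
  have hW : ∀ v : ℝ × EuclideanSpace ℝ (Fin d), W v = v.2 + v.1 • c := fun v => rfl
  set h : EuclideanSpace ℝ (Fin d) → ℝ := fun y => Complex.normSq (u₀ y) ^ σ with hhdef
  have hh : Differentiable ℝ h := (hnormSq.comp hu₀).pow σ
  set T : ℝ × EuclideanSpace ℝ (Fin d) →L[ℝ] ℂ :=
    Complex.ofRealCLM.comp (ContinuousLinearMap.fst ℝ ℝ _) with hT
  -- rewrite u
  have hufun : u = fun q : ℝ × EuclideanSpace ℝ (Fin d) =>
      u₀ (W q) * Complex.exp ((-Complex.I * lam) * (T q * ((h (W q) : ℝ) : ℂ))) := by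
    funext q
    rw [hu q]
    have h1 : W q = q.2 + q.1 • c := hW q
    have h2 : T q = (q.1 : ℂ) := rfl
    rw [← h1, h2, hhdef]
    push_cast [habs]
    ring_nf
  -- derivative facts
  have hA : HasFDerivAt (fun q => u₀ (W q)) ((fderiv ℝ u₀ (W p)).comp W) p :=
    ((hu₀ (W p)).hasFDerivAt).comp p W.hasFDerivAt
  have hHW : HasFDerivAt (fun q => h (W q)) ((fderiv ℝ h (W p)).comp W) p :=
    ((hh (W p)).hasFDerivAt).comp p W.hasFDerivAt
  have hofh : HasFDerivAt (fun q => ((h (W q) : ℝ) : ℂ))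
      (Complex.ofRealCLM.comp ((fderiv ℝ h (W p)).comp W)) p :=
    Complex.ofRealCLM.hasFDerivAt.comp p hHW
  have hTd : HasFDerivAt (fun q => T q) T p := T.hasFDerivAt
  have hmul1 := hTd.mul hofh
  have hEarg := hmul1.const_mul (-Complex.I * lam)
  have hexp := hEarg.cexp
  have hu' := hA.mul hexp
  simp only [Pi.mul_def] at hu'
  rw [← hufun] at hu'
  have hD := hu'.fderiv
  -- linear combination
  have hc : ∑ j : Fin d, c j • EuclideanSpace.single j (1 : ℝ) = c := by
    have := (EuclideanSpace.basisFun (Fin d) ℝ).toBasis.sum_repr c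
    simpa [EuclideanSpace.basisFun_apply] using this
  have hsum : ∑ j : Fin d, (c j : ℂ) * fderiv ℝ u p ((0 : ℝ), EuclideanSpace.single j (1 : ℝ))
      = fderiv ℝ u p ((0 : ℝ), c) := by
    calc ∑ j : Fin d, (c j : ℂ) * fderiv ℝ u p ((0 : ℝ), EuclideanSpace.single j (1 : ℝ))
        = ∑ j : Fin d, fderiv ℝ u p (c j • ((0 : ℝ), EuclideanSpace.single j (1 : ℝ))) := by
          refine Finset.sum_congr rfl fun j _ => ?_
          rw [map_smul, Complex.real_smul]
      _ = fderiv ℝ u p (∑ j : Fin d, c j • ((0 : ℝ), EuclideanSpace.single j (1 : ℝ))) :=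
          (map_sum _ _ _).symm
      _ = fderiv ℝ u p ((0 : ℝ), c) := by
          congr 1
          rw [Prod.ext_iff]
          constructor
          · simp [Prod.fst_sum]
          · simpa [Prod.snd_sum] using hc
  have hcomb : Complex.I * fderiv ℝ u p ((1 : ℝ), (0 : EuclideanSpace ℝ (Fin d)))
      - Complex.I * fderiv ℝ u p ((0 : ℝ), c)
      = Complex.I * fderiv ℝ u p ((1 : ℝ), -c) := by
    rw [← mul_sub, ← map_sub]
    norm_num [Prod.ext_iff]
  show Complex.I * fderiv ℝ u p ((1 : ℝ), (0 : EuclideanSpace ℝ (Fin d)))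
      - Complex.I * ∑ j : Fin d, (c j : ℂ) *
        fderiv ℝ u p ((0 : ℝ), EuclideanSpace.single j (1 : ℝ))
      = (lam : ℂ) * ((‖u p‖ ^ (2 * σ) : ℝ) : ℂ) * u p
  rw [hsum, hcomb]
  -- evaluate
  have hW0 : W ((1 : ℝ), -c) = 0 := by
    rw [hW]; simp
  rw [hD]
  simp only [ContinuousLinearMap.add_apply, ContinuousLinearMap.smul_apply,
    ContinuousLinearMap.comp_apply, hW0, map_zero, smul_zero, add_zero, zero_add,
    Complex.ofRealCLM_apply, Complex.ofReal_zero, mul_zero]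
  have hT1 : T ((1 : ℝ), -c) = 1 := by simp [hT]
  rw [hT1]
  rw [hu p]
  have hWp : W p = x + t • c := by rw [hW]
  have hTp : T p = (t : ℂ) := rfl
  rw [hWp, hTp]
  have habse : ‖(Complex.exp (-Complex.I * lam * t *
      ((‖u₀ (x + t • c)‖ ^ (2 * σ) : ℝ) : ℂ)))‖ = 1 := by
    rw [Complex.norm_exp]
    have hre : (-Complex.I * lam * t *
        ((‖u₀ (x + t • c)‖ ^ (2 * σ) : ℝ) : ℂ)).re = 0 := by
      simp only [Complex.mul_re, Complex.mul_im, ← Complex.ofReal_pow,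
        Complex.ofReal_re, Complex.ofReal_im, Complex.neg_re, Complex.neg_im,
        Complex.I_re, Complex.I_im]
      ring
    rw [hre, Real.exp_zero]
  rw [norm_mul, habse, mul_one, habs]
  simp only [hhdef, smul_eq_mul]
  push_cast
  ring_nf
  rw [Complex.I_sq]
  simp only [hp]
  ring
end

section
/- Let α ∈ ℝ, α ≠ 0, and let k ≥ 1 be an integer. Then the k-th derivative of f(r) = (log(1/r))^α on (0,1) satisfies f^{(k)}(r)·r^k·(log(1/r))^{1−α} → (−1)^k·(k−1)!·α as r → 0⁺; that is, f^{(k)}(r) is asymptotically equivalent to (−1)^k·(k−1)!·α·r^{−k}·(log(1/r))^{α−1} as r → 0⁺. -/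
open Real Filter Set Finset

private lemma log_one_div_pos' {r : ℝ} (hr : r ∈ Set.Ioo (0:ℝ) 1) : 0 < Real.log (1/r) := by
  rw [one_div, Real.log_inv]
  simpa using Real.log_neg hr.1 hr.2

private lemma hasDerivAt_log_one_div' {r : ℝ} (hr : 0 < r) :
    HasDerivAt (fun s : ℝ => Real.log (1/s)) (-r⁻¹) r := by
  have h : (fun s : ℝ => Real.log (1/s)) = fun s => -Real.log s := by
    funext s; rw [one_div, Real.log_inv]
  rw [h]
  exact (Real.hasDerivAt_log hr.ne').neg

private lemma hasDerivAt_L_rpow' {r : ℝ} (p : ℝ) (hr : r ∈ Set.Ioo (0:ℝ) 1) :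
    HasDerivAt (fun s : ℝ => Real.log (1/s) ^ p)
      (p * Real.log (1/r) ^ (p - 1) * (-r⁻¹)) r := by
  have hL := log_one_div_pos' hr
  exact (Real.hasDerivAt_rpow_const (p := p) (Or.inl hL.ne')).comp r
    (hasDerivAt_log_one_div' hr.1)

private lemma key_formula (α : ℝ) : ∀ m : ℕ, ∃ c : ℕ → ℝ,
    c 0 = (-1)^(m+1) * (m.factorial : ℝ) * α ∧
    (∀ i, m + 1 ≤ i → c i = 0) ∧
    ∀ r ∈ Set.Ioo (0:ℝ) 1,
      iteratedDeriv (m+1) (fun s : ℝ => Real.log (1/s) ^ α) r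
        = (∑ i ∈ Finset.range (m+1), c i * Real.log (1/r) ^ (α - 1 - i))
            * r ^ (-((m:ℤ)+1)) := by
  intro m
  induction m with
  | zero =>
    refine ⟨fun i => if i = 0 then -α else 0, by norm_num, ?_, ?_⟩
    · intro i hi
      dsimp only
      rw [if_neg (by omega)]
    · intro r hr
      have hd := hasDerivAt_L_rpow' α hr
      rw [iteratedDeriv_one, hd.deriv, Finset.sum_range_one]
      simp only [reduceIte, Nat.cast_zero, sub_zero]
      norm_num
  | succ m ih =>
    obtain ⟨c, hc0, hcv, hcf⟩ := ih
    refine ⟨fun i => -((m:ℝ)+1) * c i - (if i = 0 then 0 else (α - i) * c (i-1)),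
      ?_, ?_, ?_⟩
    · simp only [if_pos rfl, hc0, Nat.factorial_succ]
      push_cast
      ring
    · intro i hi
      have h1 : c i = 0 := hcv i (by omega)
      have h2 : (if i = 0 then (0:ℝ) else (α - i) * c (i-1)) = 0 := by
        rw [if_neg (by omega)]
        rw [hcv (i-1) (by omega)]
        ring
      dsimp only
      rw [h1, h2]; ring
    · intro r hr
      dsimp only
      rw [show (-(((m+1:ℕ):ℤ) + 1)) = (-((m:ℤ)+1+1)) by push_cast; ring]
      have hrne : r ≠ 0 := hr.1.ne'
      have hL := log_one_div_pos' hr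
      -- F is the explicit form of the m+1 iterated derivative
      set F : ℝ → ℝ := fun s =>
        (∑ i ∈ Finset.range (m+1), c i * Real.log (1/s) ^ (α - 1 - i))
          * s ^ (-((m:ℤ)+1)) with hF
      have hEv : iteratedDeriv (m+1) (fun s : ℝ => Real.log (1/s) ^ α) =ᶠ[nhds r] F := by
        filter_upwards [isOpen_Ioo.mem_nhds hr] with s hs
        exact hcf s hs
      have hderiv_eq : iteratedDeriv (m+2) (fun s : ℝ => Real.log (1/s) ^ α) r
          = deriv F r := by
        rw [show m + 2 = (m+1) + 1 from rfl, iteratedDeriv_succ]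
        exact hEv.deriv_eq
      -- compute deriv F r
      have hsum : HasDerivAt (fun s : ℝ =>
          ∑ i ∈ Finset.range (m+1), c i * Real.log (1/s) ^ (α - 1 - i))
          (∑ i ∈ Finset.range (m+1),
            c i * ((α - 1 - i) * Real.log (1/r) ^ (α - 1 - i - 1) * (-r⁻¹))) r := by
        apply HasDerivAt.fun_sum
        intro i _
        exact (hasDerivAt_L_rpow' (α - 1 - i) hr).const_mul (c i)
      have hz : HasDerivAt (fun s : ℝ => s ^ (-((m:ℤ)+1)))
          (((-((m:ℤ)+1) : ℤ) : ℝ) * r ^ (-((m:ℤ)+1) - 1)) r :=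
        hasDerivAt_zpow _ r (Or.inl hrne)
      have hDF : HasDerivAt F
          ((∑ i ∈ Finset.range (m+1),
            c i * ((α - 1 - i) * Real.log (1/r) ^ (α - 1 - i - 1) * (-r⁻¹)))
            * r ^ (-((m:ℤ)+1))
          + (∑ i ∈ Finset.range (m+1), c i * Real.log (1/r) ^ (α - 1 - i))
            * (((-((m:ℤ)+1) : ℤ) : ℝ) * r ^ (-((m:ℤ)+1) - 1))) r := hsum.mul hz
      rw [hderiv_eq, hDF.deriv]
      -- now the algebraic identity
      set L := Real.log (1/r) with hLdef
      -- zpow facts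
      have hz1 : r ^ (-((m:ℤ)+1)) * r⁻¹ = r ^ (-((m:ℤ)+1+1)) := by
        rw [← zpow_neg_one r, ← zpow_add₀ hrne]
        congr 1
      have hz2 : r ^ (-((m:ℤ)+1) - 1) = r ^ (-((m:ℤ)+1+1)) := by
        congr 1
      -- RHS sum split
      have hsplit : (∑ i ∈ Finset.range (m+2),
          (-((m:ℝ)+1) * c i - (if i = 0 then 0 else (α - i) * c (i-1)))
            * L ^ (α - 1 - i))
          = (∑ i ∈ Finset.range (m+1), (-((m:ℝ)+1) * c i) * L ^ (α - 1 - i))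
          + (∑ i ∈ Finset.range (m+1), (-(α - 1 - i) * c i) * L ^ (α - 1 - i - 1)) := by
        have e1 : ∀ i ∈ Finset.range (m+2),
            (-((m:ℝ)+1) * c i - (if i = 0 then 0 else (α - i) * c (i-1)))
              * L ^ (α - 1 - i)
            = (-((m:ℝ)+1) * c i) * L ^ (α - 1 - i)
              + (-(if i = 0 then 0 else (α - i) * c (i-1))) * L ^ (α - 1 - i) := by
          intro i _; ring
        rw [Finset.sum_congr rfl e1, Finset.sum_add_distrib]
        congr 1
        · rw [Finset.sum_range_succ, hcv (m+1) le_rfl]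
          simp
        · rw [Finset.sum_range_succ']
          have e0 : (-(if (0:ℕ) = 0 then (0:ℝ) else (α - ((0:ℕ):ℝ)) * c (0-1)))
              * L ^ (α - 1 - ((0:ℕ):ℝ)) = 0 := by simp
          rw [e0, add_zero]
          refine Finset.sum_congr rfl fun i _ => ?_
          rw [if_neg (Nat.succ_ne_zero i)]
          push_cast
          rw [show α - 1 - ((i:ℝ) + 1) = α - 1 - i - 1 by ring]
          ring
      rw [hsplit, add_mul, Finset.sum_mul, Finset.sum_mul, Finset.sum_mul, Finset.sum_mul,
        ← Finset.sum_add_distrib, ← Finset.sum_add_distrib]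
      apply Finset.sum_congr rfl
      intro i _
      have h3 : c i * ((α - 1 - (i:ℝ)) * L ^ (α - 1 - (i:ℝ) - 1) * (-r⁻¹)) * r ^ (-((m:ℤ)+1))
          = (-(α - 1 - (i:ℝ)) * c i) * L ^ (α - 1 - (i:ℝ) - 1) * (r ^ (-((m:ℤ)+1)) * r⁻¹) := by
        ring
      rw [h3, hz1, hz2]
      push_cast
      ring

theorem iterated_deriv_log_profile_asymptotics (α : ℝ) (hα : α ≠ 0) (k : ℕ) (hk : 1 ≤ k) :
    Filter.Tendsto
      (fun r : ℝ => iteratedDeriv k (fun s : ℝ => Real.log (1 / s) ^ α) r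
        * r ^ k * Real.log (1 / r) ^ (1 - α))
      (nhdsWithin 0 (Set.Ioi 0))
      (nhds ((-1) ^ k * ((k - 1).factorial : ℝ) * α)) := by
  obtain ⟨m, rfl⟩ : ∃ m, k = m + 1 := ⟨k - 1, (Nat.succ_pred_eq_of_pos hk).symm⟩
  obtain ⟨c, hc0, hcv, hcf⟩ := key_formula α m
  have hL_top : Tendsto (fun r : ℝ => Real.log (1/r)) (nhdsWithin 0 (Set.Ioi 0)) atTop := by
    have h : (fun r : ℝ => Real.log (1/r)) = fun r => -Real.log r := by
      funext s; rw [one_div, Real.log_inv]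
    rw [h]
    exact tendsto_neg_atBot_atTop.comp Real.tendsto_log_nhdsGT_zero
  -- the nice function
  have hnice : Tendsto (fun r : ℝ =>
      ∑ i ∈ Finset.range (m+1), c i * Real.log (1/r) ^ (-(i:ℝ)))
      (nhdsWithin 0 (Set.Ioi 0)) (nhds (c 0)) := by
    have := tendsto_finset_sum (Finset.range (m+1))
      (f := fun i (r : ℝ) => c i * Real.log (1/r) ^ (-(i:ℝ)))
      (a := fun i => if i = 0 then c 0 else 0)
      (x := nhdsWithin (0:ℝ) (Set.Ioi 0)) ?_
    · have hs : (∑ i ∈ Finset.range (m+1), if i = 0 then c 0 else 0) = c 0 := by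
        rw [Finset.sum_ite_eq' (Finset.range (m+1)) 0 (fun _ => c 0)]
        simp
      rwa [hs] at this
    · intro i _
      rcases Nat.eq_zero_or_pos i with hi | hi
      · subst hi
        simp only [if_pos rfl, Nat.cast_zero, neg_zero, Real.rpow_zero, mul_one]
        exact tendsto_const_nhds
      · have h0 : Tendsto (fun r : ℝ => Real.log (1/r) ^ (-(i:ℝ)))
            (nhdsWithin 0 (Set.Ioi 0)) (nhds 0) :=
          (tendsto_rpow_neg_atTop (by exact_mod_cast hi)).comp hL_top
        rw [if_neg hi.ne']
        simpa using h0.const_mul (c i)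
  have heq : (fun r : ℝ => ∑ i ∈ Finset.range (m+1), c i * Real.log (1/r) ^ (-(i:ℝ)))
      =ᶠ[nhdsWithin 0 (Set.Ioi 0)]
      (fun r : ℝ => iteratedDeriv (m+1) (fun s : ℝ => Real.log (1 / s) ^ α) r
        * r ^ (m+1) * Real.log (1 / r) ^ (1 - α)) := by
    filter_upwards [Ioo_mem_nhdsGT_of_mem
        (by constructor <;> norm_num : (0:ℝ) ∈ Set.Ico (0:ℝ) 1)] with r hr
    have hrne : r ≠ 0 := hr.1.ne'
    have hL := log_one_div_pos' hr
    rw [hcf r hr]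
    have hz : r ^ (-((m:ℤ)+1)) * r ^ (m+1) = 1 := by
      rw [← zpow_natCast r (m+1), ← zpow_add₀ hrne,
        show (-((m:ℤ)+1) + ((m+1:ℕ):ℤ)) = 0 by push_cast; ring, zpow_zero]
    calc (∑ i ∈ Finset.range (m+1), c i * Real.log (1/r) ^ (-(i:ℝ)))
        = (∑ i ∈ Finset.range (m+1), c i * Real.log (1/r) ^ (α - 1 - i))
          * Real.log (1/r) ^ (1 - α) := by
          rw [Finset.sum_mul]
          apply Finset.sum_congr rfl
          intro i _
          rw [mul_assoc, ← Real.rpow_add hL]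
          congr 1
          ring
      _ = (∑ i ∈ Finset.range (m+1), c i * Real.log (1/r) ^ (α - 1 - i))
          * (r ^ (-((m:ℤ)+1)) * r ^ (m+1)) * Real.log (1/r) ^ (1 - α) := by
          rw [hz, mul_one]
      _ = (∑ i ∈ Finset.range (m+1), c i * Real.log (1/r) ^ (α - 1 - i))
          * r ^ (-((m:ℤ)+1)) * r ^ (m+1) * Real.log (1/r) ^ (1 - α) := by ring
  have h2 := hnice.congr' heq
  have hval : c 0 = (-1:ℝ)^(m+1) * (((m+1-1).factorial : ℕ) : ℝ) * α := by
    rw [hc0]; norm_num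
  rwa [hval] at h2
end

section
/- Let σ > 0, 0 < α < 1/2, λ ∈ ℝ with λ ≠ 0, t > 0, and let k ≥ 1 be an integer. Define g : (0, 1/2) → ℂ by g(r) = (log(1/r))^α·exp(−i·λ·t·(log(1/r))^{2σα}), and set γ_k := max((2σk+1)·α − k, (2σ+1)·α − 1). Then there exist constants c > 0 and ω > 0 such that, as r → 0⁺, the difference |g^{(k)}(r)| − c·r^{−k}·(log(1/r))^{γ_k} is O(r^{−k}·(log(1/r))^{γ_k − ω}). -/
namespace RPA

noncomputable def P (l : List (ℂ × ℝ)) (x : ℝ) : ℂ :=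
  (l.map (fun p => p.1 * ((x ^ p.2 : ℝ) : ℂ))).sum

def sc (c : ℂ) (l : List (ℂ × ℝ)) : List (ℂ × ℝ) := l.map fun p => (c * p.1, p.2)
def sh (c : ℂ) (δ : ℝ) (l : List (ℂ × ℝ)) : List (ℂ × ℝ) := l.map fun p => (c * p.1, p.2 + δ)
def Dl (l : List (ℂ × ℝ)) : List (ℂ × ℝ) := l.map fun p => (-p.2 * p.1, p.2 - 1)

lemma P_nil (x : ℝ) : P [] x = 0 := rfl

lemma P_cons (a : ℂ × ℝ) (l : List (ℂ × ℝ)) (x : ℝ) :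
    P (a :: l) x = a.1 * ((x ^ a.2 : ℝ) : ℂ) + P l x := by simp [P]

lemma P_append (l₁ l₂ : List (ℂ × ℝ)) (x : ℝ) : P (l₁ ++ l₂) x = P l₁ x + P l₂ x := by
  simp [P]

lemma P_sc (c : ℂ) (l : List (ℂ × ℝ)) (x : ℝ) : P (sc c l) x = c * P l x := by
  induction l with
  | nil => simp [P, sc]
  | cons a l ih => simp only [sc, List.map_cons] at ih ⊢; rw [P_cons, P_cons, ih]; ring

lemma P_sh (c : ℂ) (δ : ℝ) (l : List (ℂ × ℝ)) (x : ℝ) (hx : 0 < x) :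
    P (sh c δ l) x = c * ((x ^ δ : ℝ) : ℂ) * P l x := by
  induction l with
  | nil => simp [P, sh]
  | cons a l ih =>
      simp only [sh, List.map_cons] at ih ⊢
      rw [P_cons, P_cons, ih, Real.rpow_add hx]
      push_cast; ring

lemma hasDerivAt_P (l : List (ℂ × ℝ)) (r : ℝ) (hr0 : 0 < r) (hr1 : r < 1) :
    HasDerivAt (fun s => P l (Real.log (1/s))) (r⁻¹ * P (Dl l) (Real.log (1/r))) r := by
  have hL : 0 < Real.log (1/r) := Real.log_pos (by rw [lt_div_iff₀ hr0]; linarith)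
  induction l with
  | nil => simpa [P, Dl] using (hasDerivAt_const r (0:ℂ))
  | cons a l ih =>
      have hlog : HasDerivAt (fun s : ℝ => Real.log (1/s)) (-r⁻¹) r := by
        have : (fun s : ℝ => Real.log (1/s)) = fun s : ℝ => -Real.log s := by
          funext s; rw [one_div, Real.log_inv]
        rw [this]
        exact (Real.hasDerivAt_log hr0.ne').neg
      have hpow : HasDerivAt (fun x : ℝ => x ^ a.2)
          (a.2 * Real.log (1/r) ^ (a.2 - 1)) (Real.log (1/r)) :=
        Real.hasDerivAt_rpow_const (Or.inl hL.ne')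
      have h1 : HasDerivAt (fun s : ℝ => Real.log (1/s) ^ a.2)
          (a.2 * Real.log (1/r) ^ (a.2 - 1) * (-r⁻¹)) r := by have h := hpow.comp r hlog; exact h
      have h2 := (h1.ofReal_comp).const_mul a.1
      have h3 := h2.add ih
      have : (fun s : ℝ => P (a :: l) (Real.log (1/s)))
          = fun s => a.1 * ((Real.log (1/s) ^ a.2 : ℝ) : ℂ) + P l (Real.log (1/s)) := by
        funext s; rw [P_cons]
      rw [this]
      refine h3.congr_deriv ?_
      simp only [Dl, List.map_cons, P_cons]
      push_cast
      ring

noncomputable def E (c : ℂ) (μ : ℝ) (s : ℝ) : ℂ := Complex.exp (c * ((Real.log (1/s) ^ μ : ℝ) : ℂ))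

/-- One differentiation step on the representation `s^(-k) * E * P l (log(1/s))`. -/
lemma step_deriv (c : ℂ) (μ : ℝ) (k : ℕ) (l : List (ℂ × ℝ)) (r : ℝ)
    (hr0 : 0 < r) (hr1 : r < 1) :
    HasDerivAt (fun s : ℝ => ((s ^ (-(k:ℝ)) : ℝ) : ℂ) * E c μ s * P l (Real.log (1/s)))
      (((r ^ (-((k:ℝ)+1)) : ℝ) : ℂ) * E c μ r *
        P (sc (-(k:ℂ)) l ++ sh (-c * μ) (μ - 1) l ++ Dl l) (Real.log (1/r))) r := by
  have hL : 0 < Real.log (1/r) := Real.log_pos (by rw [lt_div_iff₀ hr0]; linarith)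
  have hlog : HasDerivAt (fun s : ℝ => Real.log (1/s)) (-r⁻¹) r := by
    have : (fun s : ℝ => Real.log (1/s)) = fun s : ℝ => -Real.log s := by
      funext s; rw [one_div, Real.log_inv]
    rw [this]; exact (Real.hasDerivAt_log hr0.ne').neg
  -- derivative of s ^ (-k)
  have h1 : HasDerivAt (fun s : ℝ => ((s ^ (-(k:ℝ)) : ℝ) : ℂ))
      ((((-(k:ℝ)) * r ^ (-(k:ℝ) - 1) : ℝ)) : ℂ) r :=
    (Real.hasDerivAt_rpow_const (Or.inl hr0.ne')).ofReal_comp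
  -- derivative of E
  have hpowμ : HasDerivAt (fun s : ℝ => Real.log (1/s) ^ μ)
      (μ * Real.log (1/r) ^ (μ - 1) * (-r⁻¹)) r :=
    by have h := (Real.hasDerivAt_rpow_const (p := μ) (Or.inl hL.ne')).comp r hlog; exact h
  have hE : HasDerivAt (fun s : ℝ => E c μ s)
      (E c μ r * (c * ((μ * Real.log (1/r) ^ (μ - 1) * (-r⁻¹) : ℝ) : ℂ))) r := by
    exact (((hpowμ.ofReal_comp).const_mul c).cexp)
  have hP := hasDerivAt_P l r hr0 hr1
  have h12 := h1.mul hE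
  have h := h12.mul hP
  refine h.congr_deriv ?_
  rw [P_append, P_append, P_sc, P_sh _ _ _ _ hL]
  have e1 : (r:ℝ) ^ (-(k:ℝ) - 1) = r ^ (-(k:ℝ)) * r⁻¹ := by
    rw [← Real.rpow_neg_one r, ← Real.rpow_add hr0]; ring_nf
  have e2 : (r:ℝ) ^ (-((k:ℝ)+1)) = r ^ (-(k:ℝ)) * r⁻¹ := by
    rw [← Real.rpow_neg_one r, ← Real.rpow_add hr0]; ring_nf
  rw [e1, e2, Pi.mul_apply]
  push_cast
  ring

lemma mem_exp_sc {p : ℂ × ℝ} {c : ℂ} {l : List (ℂ × ℝ)} (h : p ∈ sc c l) :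
    ∃ q ∈ l, p.2 = q.2 := by
  simp only [sc, List.mem_map] at h; obtain ⟨q, hq, rfl⟩ := h; exact ⟨q, hq, rfl⟩

lemma mem_exp_sh {p : ℂ × ℝ} {c : ℂ} {δ : ℝ} {l : List (ℂ × ℝ)} (h : p ∈ sh c δ l) :
    ∃ q ∈ l, p.2 = q.2 + δ := by
  simp only [sh, List.mem_map] at h; obtain ⟨q, hq, rfl⟩ := h; exact ⟨q, hq, rfl⟩

lemma mem_exp_Dl {p : ℂ × ℝ} {l : List (ℂ × ℝ)} (h : p ∈ Dl l) :
    ∃ q ∈ l, p.2 = q.2 - 1 := by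
  simp only [Dl, List.mem_map] at h; obtain ⟨q, hq, rfl⟩ := h; exact ⟨q, hq, rfl⟩

lemma rep (c : ℂ) (μ α : ℝ) (hα : 0 < α) (hμ : 0 < μ)
    (hAim : (-c * μ).im ≠ 0) :
    ∀ k : ℕ, 1 ≤ k → ∃ c₀ : ℂ, c₀ ≠ 0 ∧ ∃ ω > (0:ℝ), ∃ rest : List (ℂ × ℝ),
      (∀ p ∈ rest, p.2 ≤ (α + max ((k:ℝ)*(μ-1)) (μ-1)) - ω) ∧
      ∀ r ∈ Set.Ioo (0:ℝ) 1,
        iteratedDeriv k (fun s : ℝ => ((Real.log (1/s) ^ α : ℝ) : ℂ) * E c μ s) r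
        = ((r ^ (-(k:ℝ)) : ℝ) : ℂ) * E c μ r *
            P ((c₀, α + max ((k:ℝ)*(μ-1)) (μ-1)) :: rest) (Real.log (1/r)) := by
  set g : ℝ → ℂ := fun s : ℝ => ((Real.log (1/s) ^ α : ℝ) : ℂ) * E c μ s with hg
  set A : ℂ := -c * μ with hAdef
  have hA0 : A ≠ 0 := fun h => hAim (by rw [h, Complex.zero_im])
  intro k hk
  induction k, hk using Nat.le_induction with
  | base =>
      refine ⟨A, hA0, μ, hμ, [((-α : ℂ), α - 1)], ?_, ?_⟩
      · intro p hp
        simp only [List.mem_singleton] at hp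
        subst hp
        simp only [Nat.cast_one, one_mul, max_self]
        linarith
      · intro r hr
        have hgeq : g = fun s : ℝ => ((s ^ (-((0:ℕ):ℝ)) : ℝ) : ℂ) * E c μ s
            * P [(1, α)] (Real.log (1/s)) := by
          funext s
          simp only [hg, P_cons, P_nil, Nat.cast_zero, neg_zero, Real.rpow_zero]
          push_cast; ring
        have hd := step_deriv c μ 0 [(1, α)] r hr.1 hr.2
        rw [← hgeq] at hd
        rw [iteratedDeriv_one, hd.deriv]
        have e1 : -(((0:ℕ):ℝ)+1) = -((1:ℕ):ℝ) := by norm_num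
        rw [e1]
        congr 1
        simp only [sc, sh, Dl, List.map_cons, List.map_nil, List.nil_append,
          List.cons_append, P_cons, P_nil, Nat.cast_one, one_mul, max_self]
        ring
  | succ k hk ih =>
      obtain ⟨c₀, hc₀, ω, hω, rest, hrest, hrep⟩ := ih
      set γ : ℝ := α + max ((k:ℝ)*(μ-1)) (μ-1) with hγ
      set γ' : ℝ := α + max ((((k+1:ℕ)):ℝ)*(μ-1)) (μ-1) with hγ'
      have hk1 : (1:ℝ) ≤ (k:ℝ) := by exact_mod_cast hk
      have hder : ∀ r ∈ Set.Ioo (0:ℝ) 1, iteratedDeriv (k+1) g r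
          = ((r ^ (-(((k+1:ℕ)):ℝ)) : ℝ) : ℂ) * E c μ r *
            P (sc (-(k:ℂ)) ((c₀,γ)::rest) ++ sh A (μ-1) ((c₀,γ)::rest)
               ++ Dl ((c₀,γ)::rest)) (Real.log (1/r)) := by
        intro r hr
        have hF := step_deriv c μ k ((c₀,γ)::rest) r hr.1 hr.2
        have hev : iteratedDeriv k g =ᶠ[nhds r]
            (fun s => ((s ^ (-(k:ℝ)) : ℝ) : ℂ) * E c μ s
              * P ((c₀,γ)::rest) (Real.log (1/s))) :=
          Filter.eventuallyEq_of_mem (Ioo_mem_nhds hr.1 hr.2) (fun x hx => hrep x hx)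
        have ec : -((((k+1:ℕ)):ℝ)) = -((k:ℝ)+1) := by push_cast; ring
        rw [iteratedDeriv_succ, hev.deriv_eq, hF.deriv, ec, ← hAdef]
      have hPstep : ∀ x : ℝ, 0 < x →
          P (sc (-(k:ℂ)) ((c₀,γ)::rest) ++ sh A (μ-1) ((c₀,γ)::rest)
             ++ Dl ((c₀,γ)::rest)) x
          = (-(k:ℂ)*c₀) * ((x^γ : ℝ) : ℂ) + (A*c₀) * ((x^(γ+(μ-1)) : ℝ) : ℂ)
            + ((-γ:ℂ)*c₀) * ((x^(γ-1) : ℝ) : ℂ)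
            + P (sc (-(k:ℂ)) rest ++ sh A (μ-1) rest ++ Dl rest) x := by
        intro x hx
        simp only [sc, sh, Dl, List.map_cons, P_append, P_cons]
        rw [Real.rpow_add hx]
        push_cast
        ring
      rcases lt_trichotomy μ 1 with hc1 | hc1 | hc1
      · -- μ < 1
        have hm1 : max ((k:ℝ)*(μ-1)) (μ-1) = μ-1 :=
          max_eq_right (by nlinarith)
        have hm2 : max ((((k+1:ℕ)):ℝ)*(μ-1)) (μ-1) = μ-1 :=
          max_eq_right (by push_cast; nlinarith)
        have hγγ' : γ' = γ := by rw [hγ, hγ', hm1, hm2]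
        have hkC : ((k:ℂ)) ≠ 0 := Nat.cast_ne_zero.mpr (by omega)
        refine ⟨-(k:ℂ)*c₀, mul_ne_zero (neg_ne_zero.mpr hkC) hc₀,
          min (min ω (1-μ)) 1, lt_min (lt_min hω (by linarith)) one_pos, 
          (A*c₀, γ+(μ-1)) :: ((-γ:ℂ)*c₀, γ-1)
            :: (sc (-(k:ℂ)) rest ++ sh A (μ-1) rest ++ Dl rest), ?_, ?_⟩
        · intro p hp
          have hω1 : min (min ω (1-μ)) 1 ≤ ω := le_trans (min_le_left _ _) (min_le_left _ _)
          have hω2 : min (min ω (1-μ)) 1 ≤ 1-μ := le_trans (min_le_left _ _) (min_le_right _ _)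
          have hω3 : min (min ω (1-μ)) 1 ≤ 1 := min_le_right _ _
          rw [hγγ']
          simp only [List.mem_cons, List.mem_append] at hp
          rcases hp with rfl | rfl | ((hp | hp) | hp)
          · dsimp only; linarith
          · dsimp only; linarith
          · obtain ⟨q, hq, hpe⟩ := mem_exp_sc hp; have := hrest q hq; rw [hpe]; linarith
          · obtain ⟨q, hq, hpe⟩ := mem_exp_sh hp; have := hrest q hq; rw [hpe]; linarith
          · obtain ⟨q, hq, hpe⟩ := mem_exp_Dl hp; have := hrest q hq; rw [hpe]; linarith
        · intro r hr
          have hL : 0 < Real.log (1/r) :=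
            Real.log_pos (by rw [lt_div_iff₀ hr.1]; linarith [hr.2])
          rw [hder r hr, hPstep _ hL]
          rw [hγγ']
          simp only [P_cons]
          ring
      · -- μ = 1
        have hm1 : max ((k:ℝ)*(μ-1)) (μ-1) = μ-1 := by rw [hc1]; norm_num
        have hm2 : max ((((k+1:ℕ)):ℝ)*(μ-1)) (μ-1) = μ-1 := by rw [hc1]; norm_num
        have hγγ' : γ' = γ := by rw [hγ, hγ', hm1, hm2]
        have hAk : A - (k:ℂ) ≠ 0 := by
          intro h
          apply hAim
          have := congrArg Complex.im h
          simpa using this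
        refine ⟨(A - (k:ℂ))*c₀, mul_ne_zero hAk hc₀, min ω 1, by positivity,
          ((-γ:ℂ)*c₀, γ-1) :: (sc (-(k:ℂ)) rest ++ sh A (μ-1) rest ++ Dl rest), ?_, ?_⟩
        · intro p hp
          have hω1 : min ω 1 ≤ ω := min_le_left _ _
          have hω3 : min ω 1 ≤ 1 := min_le_right _ _
          rw [hγγ']
          simp only [List.mem_cons, List.mem_append] at hp
          rcases hp with rfl | ((hp | hp) | hp)
          · dsimp only; linarith
          · obtain ⟨q, hq, hpe⟩ := mem_exp_sc hp; have := hrest q hq; rw [hpe]; linarith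
          · obtain ⟨q, hq, hpe⟩ := mem_exp_sh hp; have := hrest q hq; rw [hpe, hc1]; linarith
          · obtain ⟨q, hq, hpe⟩ := mem_exp_Dl hp; have := hrest q hq; rw [hpe]; linarith
        · intro r hr
          have hL : 0 < Real.log (1/r) :=
            Real.log_pos (by rw [lt_div_iff₀ hr.1]; linarith [hr.2])
          rw [hder r hr, hPstep _ hL]
          rw [hγγ']
          have he : γ + (μ-1) = γ := by rw [hc1]; ring
          rw [he]
          simp only [P_cons]
          ring
      · -- μ > 1
        have hm1 : max ((k:ℝ)*(μ-1)) (μ-1) = (k:ℝ)*(μ-1) :=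
          max_eq_left (by nlinarith)
        have hm2 : max ((((k+1:ℕ)):ℝ)*(μ-1)) (μ-1) = (((k+1:ℕ)):ℝ)*(μ-1) :=
          max_eq_left (by push_cast; nlinarith)
        have hγγ' : γ' = γ + (μ-1) := by rw [hγ, hγ', hm1, hm2]; push_cast; ring
        refine ⟨A*c₀, mul_ne_zero hA0 hc₀, min (min ω (μ-1)) 1, lt_min (lt_min hω (by linarith)) one_pos,
          (-(k:ℂ)*c₀, γ) :: ((-γ:ℂ)*c₀, γ-1)
            :: (sc (-(k:ℂ)) rest ++ sh A (μ-1) rest ++ Dl rest), ?_, ?_⟩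
        · intro p hp
          have hω1 : min (min ω (μ-1)) 1 ≤ ω := le_trans (min_le_left _ _) (min_le_left _ _)
          have hω2 : min (min ω (μ-1)) 1 ≤ μ-1 := le_trans (min_le_left _ _) (min_le_right _ _)
          have hω3 : min (min ω (μ-1)) 1 ≤ 1 := min_le_right _ _
          rw [hγγ']
          simp only [List.mem_cons, List.mem_append] at hp
          rcases hp with rfl | rfl | ((hp | hp) | hp)
          · dsimp only; linarith
          · dsimp only; linarith
          · obtain ⟨q, hq, hpe⟩ := mem_exp_sc hp; have := hrest q hq; rw [hpe]; linarith
          · obtain ⟨q, hq, hpe⟩ := mem_exp_sh hp; have := hrest q hq; rw [hpe]; linarith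
          · obtain ⟨q, hq, hpe⟩ := mem_exp_Dl hp; have := hrest q hq; rw [hpe]; linarith
        · intro r hr
          have hL : 0 < Real.log (1/r) :=
            Real.log_pos (by rw [lt_div_iff₀ hr.1]; linarith [hr.2])
          rw [hder r hr, hPstep _ hL]
          rw [hγγ']
          simp only [P_cons]
          ring


lemma P_bound (l : List (ℂ × ℝ)) (b x : ℝ) (hx : 1 ≤ x) (hb : ∀ p ∈ l, p.2 ≤ b) :
    ‖P l x‖ ≤ (l.map fun p => ‖p.1‖).sum * x ^ b := by
  induction l with
  | nil =>
      simp only [P, List.map_nil, List.sum_nil, zero_mul, norm_zero, le_refl]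
  | cons a l ih =>
      rw [P_cons, List.map_cons, List.sum_cons, add_mul]
      refine le_trans (norm_add_le _ _)
        (add_le_add ?_ (ih (fun p hp => hb p (List.mem_cons_of_mem _ hp))))
      rw [norm_mul, Complex.norm_real, Real.norm_eq_abs, abs_of_nonneg (Real.rpow_nonneg (by linarith) _)]
      exact mul_le_mul_of_nonneg_left
        (Real.rpow_le_rpow_of_exponent_le hx (hb a List.mem_cons_self))
        (norm_nonneg _)

end RPA

open Asymptotics RPA

theorem radial_profile_asymptotics (σ α lam t : ℝ) (hσ : 0 < σ)
    (hα1 : 0 < α) (hα2 : α < 1/2) (hlam : lam ≠ 0) (ht : 0 < t)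
    (k : ℕ) (hk : 1 ≤ k) :
    ∃ c > (0 : ℝ), ∃ ω > (0 : ℝ),
      (fun r : ℝ =>
          ‖(iteratedDeriv k
            (fun s : ℝ => ((Real.log (1 / s) ^ α : ℝ) : ℂ) *
              Complex.exp (-Complex.I * (lam : ℂ) * (t : ℂ)
                * ((Real.log (1 / s) ^ (2 * σ * α) : ℝ) : ℂ))) r)‖
          - c * r ^ (-(k : ℝ)) *
              Real.log (1 / r) ^ (max ((2 * σ * k + 1) * α - k) ((2 * σ + 1) * α - 1)))
        =O[nhdsWithin 0 (Set.Ioi 0)]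
      (fun r : ℝ => r ^ (-(k : ℝ)) *
        Real.log (1 / r) ^ (max ((2 * σ * k + 1) * α - k) ((2 * σ + 1) * α - 1) - ω)) := by
  set cc : ℂ := -Complex.I * (lam : ℂ) * (t : ℂ) with hcc
  set μ : ℝ := 2 * σ * α with hμdef
  have hμ : 0 < μ := by positivity
  have hAim : (-cc * (μ:ℂ)).im ≠ 0 := by
    have h1 : -cc * (μ:ℂ) = Complex.I * ((lam*t*μ : ℝ) : ℂ) := by
      rw [hcc]; push_cast; ring
    rw [h1]
    simp only [Complex.mul_im, Complex.I_re, Complex.I_im, Complex.ofReal_re,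
      Complex.ofReal_im, zero_mul, one_mul, add_zero, zero_add, mul_zero]
    exact mul_ne_zero (mul_ne_zero hlam ht.ne') hμ.ne'
  obtain ⟨c₀, hc₀, ω, hω, rest, hrest, hrep⟩ := rep cc μ α hα1 hμ hAim k hk
  -- identify the exponent
  have hγeq : α + max ((k:ℝ)*(μ-1)) (μ-1)
      = max ((2 * σ * k + 1) * α - k) ((2 * σ + 1) * α - 1) := by
    rw [show (2*σ*(k:ℝ)+1)*α - (k:ℝ) = α + (k:ℝ)*(μ-1) by rw [hμdef]; ring,
        show (2*σ+1)*α - 1 = α + (μ-1) by rw [hμdef]; ring]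
    rw [max_add_add_left]
  set γ : ℝ := max ((2 * σ * (k:ℝ) + 1) * α - k) ((2 * σ + 1) * α - 1) with hγdef
  rw [hγeq] at hrep hrest
  refine ⟨‖c₀‖, norm_pos_iff.mpr hc₀, ω, hω, ?_⟩
  rw [isBigO_iff]
  refine ⟨(rest.map fun p => ‖p.1‖).sum, ?_⟩
  have hmem : Set.Ioo (0:ℝ) (Real.exp (-1)) ∈ nhdsWithin 0 (Set.Ioi 0) :=
    Ioo_mem_nhdsGT_of_mem ⟨le_refl 0, by positivity⟩
  filter_upwards [hmem] with r hr
  have hr0 : 0 < r := hr.1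
  have hr1 : r < 1 := lt_trans hr.2 (by
    calc Real.exp (-1) < Real.exp 0 := Real.exp_lt_exp.mpr (by norm_num)
    _ = 1 := Real.exp_zero)
  have hlog : Real.log r < -1 := by
    have := Real.log_lt_log hr0 hr.2
    rwa [Real.log_exp] at this
  have hL : Real.log (1/r) = -Real.log r := by rw [one_div, Real.log_inv]
  have hL1 : 1 ≤ Real.log (1/r) := by rw [hL]; linarith
  have hL0 : (0:ℝ) < Real.log (1/r) := by linarith
  set x : ℝ := Real.log (1/r) with hx
  -- the k-th derivative value
  simp only [E] at hrep
  rw [hrep r ⟨hr0, hr1⟩]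
  -- compute absolute value
  have habsE : ‖Complex.exp (cc * ((x ^ μ : ℝ) : ℂ))‖ = 1 := by
    rw [Complex.norm_exp]
    have : (cc * ((x ^ μ : ℝ) : ℂ)).re = 0 := by
      simp [hcc, Complex.mul_re, Complex.mul_im]
    rw [this, Real.exp_zero]
  have hrk : ‖(((r ^ (-(k:ℝ)) : ℝ) : ℂ))‖ = r ^ (-(k:ℝ)) := by
    rw [Complex.norm_real, Real.norm_eq_abs, abs_of_nonneg (Real.rpow_nonneg hr0.le _)]
  rw [P_cons, norm_mul, norm_mul, habsE, hrk, mul_one]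
  have habs0 : ‖c₀ * ((x ^ γ : ℝ) : ℂ)‖ = ‖c₀‖ * x ^ γ := by
    rw [norm_mul, Complex.norm_real, Real.norm_eq_abs, abs_of_nonneg (Real.rpow_nonneg hL0.le _)]
  have key : |‖c₀ * ((x ^ γ : ℝ) : ℂ) + P rest x‖
      - ‖c₀‖ * x ^ γ| ≤ ‖P rest x‖ := by
    rw [← habs0]
    have := abs_norm_sub_norm_le (c₀ * ((x ^ γ : ℝ) : ℂ) + P rest x) (c₀ * ((x ^ γ : ℝ) : ℂ))
    simpa using this
  have hPb : ‖P rest x‖ ≤ (rest.map fun p => ‖p.1‖).sum * x ^ (γ - ω) :=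
    P_bound rest (γ - ω) x hL1 hrest
  have hRHSnn : 0 ≤ r ^ (-(k:ℝ)) * x ^ (γ - ω) := by
    exact mul_nonneg (Real.rpow_nonneg hr0.le _) (Real.rpow_nonneg hL0.le _)
  rw [Real.norm_eq_abs, Real.norm_eq_abs, abs_of_nonneg hRHSnn]
  calc |r ^ (-(k:ℝ)) * ‖c₀ * ((x ^ γ : ℝ) : ℂ) + P rest x‖
        - ‖c₀‖ * r ^ (-(k:ℝ)) * x ^ γ|
      = r ^ (-(k:ℝ)) * |‖c₀ * ((x ^ γ : ℝ) : ℂ) + P rest x‖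
          - ‖c₀‖ * x ^ γ| := by
        conv_rhs => rw [← abs_of_nonneg (Real.rpow_nonneg hr0.le (-(k:ℝ))), ← abs_mul]
        congr 1
        ring
    _ ≤ r ^ (-(k:ℝ)) * ‖P rest x‖ :=
        mul_le_mul_of_nonneg_left key (Real.rpow_nonneg hr0.le _)
    _ ≤ r ^ (-(k:ℝ)) * ((rest.map fun p => ‖p.1‖).sum * x ^ (γ - ω)) :=
        mul_le_mul_of_nonneg_left hPb (Real.rpow_nonneg hr0.le _)
    _ = (rest.map fun p => ‖p.1‖).sum * (r ^ (-(k:ℝ)) * x ^ (γ - ω)) := by ring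
end

section
/- Let d ≥ 1, σ > 0, λ ∈ ℝ with λ ≠ 0, and let s ≥ 1 be an integer. Define a₀ : ℝ^d → ℝ by a₀(y) = exp(−‖y‖²), and for κ ∈ (0,1], ε > 0, τ ≥ 0 define φ_τ : ℝ^d → ℂ by φ_τ(y) = κ·a₀(y)·exp(−i·λ·(τ/ε)·κ^{2σ}·a₀(y)^{2σ}). Then there exist constants c > 0 and C > 0, depending only on d, σ, λ, s, such that for all κ ∈ (0,1], ε > 0, τ ≥ 0: (∫_{ℝ^d} ‖D^s φ_τ(y)‖² dy)^{1/2} ≥ c·κ^{1+2σs}·(τ/ε)^s − C·κ, where D^s φ_τ(y) denotes the s-th iterated Fréchet derivative of φ_τ at y and ‖·‖ its operator norm. -/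
open Finset

namespace GaussianAux

noncomputable def cfam (E w : ℝ → ℝ) : ℕ → ℕ → ℝ → ℝ
  | 0, 0 => E
  | 0, _+1 => 0
  | n+1, 0 => deriv (cfam E w n 0)
  | n+1, k+1 => deriv (cfam E w n (k+1)) + fun u => deriv w u * cfam E w n k u

theorem deriv_zero_fun : deriv (0 : ℝ → ℝ) = 0 := by
  funext x; exact deriv_const x 0

theorem cfam_contDiff {E w : ℝ → ℝ} (hE : ContDiff ℝ (⊤ : ℕ∞) E)
    (hw : ContDiff ℝ (⊤ : ℕ∞) w) : ∀ n k, ContDiff ℝ (⊤ : ℕ∞) (cfam E w n k) := by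
  intro n
  induction n with
  | zero => intro k; cases k with
    | zero => exact hE
    | succ k => exact contDiff_const
  | succ n ih => intro k; cases k with
    | zero => exact (contDiff_infty_iff_deriv.mp (ih 0)).2
    | succ k =>
      exact ((contDiff_infty_iff_deriv.mp (ih (k+1))).2).add
        (((contDiff_infty_iff_deriv.mp hw).2).mul (ih k))

theorem cfam_zero_of_lt {E w : ℝ → ℝ} : ∀ n k, n < k → cfam E w n k = 0 := by
  intro n
  induction n with
  | zero => intro k hk; cases k with
    | zero => omega
    | succ k => rfl
  | succ n ih => intro k hk; cases k with
    | zero => omega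
    | succ k =>
      show deriv (cfam E w n (k+1)) + _ = 0
      rw [ih (k+1) (by omega), ih k (by omega)]
      funext u; simp [deriv_zero_fun]

theorem cfam_diag {E w : ℝ → ℝ} : ∀ n, cfam E w n n = fun u => E u * (deriv w u) ^ n := by
  intro n
  induction n with
  | zero => funext u; simp [cfam]
  | succ n ih =>
    show deriv (cfam E w n (n+1)) + _ = _
    rw [cfam_zero_of_lt n (n+1) (by omega), ih, deriv_zero_fun]
    funext u
    simp [pow_succ]
    ring
theorem iteratedDeriv_mul_cexp {E w : ℝ → ℝ} (hE : ContDiff ℝ (⊤ : ℕ∞) E)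
    (hw : ContDiff ℝ (⊤ : ℕ∞) w) (Bc : ℂ) :
    ∀ (n : ℕ) (u : ℝ),
      iteratedDeriv n (fun x => (E x : ℂ) * Complex.exp (Bc * (w x : ℂ))) u
        = Complex.exp (Bc * (w u : ℂ)) *
            ∑ k ∈ range (n+1), Bc ^ k * (cfam E w n k u : ℂ) := by
  intro n
  induction n with
  | zero =>
    intro u
    simp [cfam, mul_comm]
  | succ n ih =>
    intro u
    rw [iteratedDeriv_succ, funext ih]
    have hderiv : ∀ (g : ℝ → ℝ), ContDiff ℝ (⊤ : ℕ∞) g → ∀ x : ℝ,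
        HasDerivAt (fun y => (g y : ℂ)) ((deriv g x : ℝ) : ℂ) x := by
      intro g hg x
      exact ((hg.differentiable (by simp)).differentiableAt.hasDerivAt).ofReal_comp
    have hexp : HasDerivAt (fun x => Complex.exp (Bc * (w x : ℂ)))
        (Complex.exp (Bc * (w u : ℂ)) * (Bc * ((deriv w u : ℝ) : ℂ))) u :=
      (HasDerivAt.const_mul Bc (hderiv w hw u)).cexp
    have hS : HasDerivAt (fun x => ∑ k ∈ range (n+1), Bc ^ k * (cfam E w n k x : ℂ))
        (∑ k ∈ range (n+1), Bc ^ k * ((deriv (cfam E w n k) u : ℝ) : ℂ)) u := by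
      apply HasDerivAt.fun_sum
      intro k _
      exact HasDerivAt.const_mul _ (hderiv _ (cfam_contDiff hE hw n k) u)
    rw [(hexp.fun_mul hS).deriv]
    have hzero : deriv (cfam E w n (n+1)) u = 0 := by
      rw [cfam_zero_of_lt n (n+1) (by omega), deriv_zero_fun]; rfl
    have hc0 : cfam E w (n + 1) 0 = deriv (cfam E w n 0) := rfl
    have hcs : ∀ k, cfam E w (n + 1) (k+1) u
        = deriv (cfam E w n (k+1)) u + deriv w u * cfam E w n k u := fun k => rfl
    have hT : (∑ k ∈ range (n+1), Bc ^ k * ((deriv (cfam E w n k) u : ℝ) : ℂ))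
        = (∑ x ∈ range n, Bc ^ (x+1) * ((deriv (cfam E w n (x+1)) u : ℝ) : ℂ))
          + ((deriv (cfam E w n 0) u : ℝ) : ℂ) := by
      rw [sum_range_succ' (fun k => Bc ^ k * ((deriv (cfam E w n k) u : ℝ) : ℂ)) n]
      simp
    have hS2 : (Bc * ((deriv w u : ℝ) : ℂ))
          * (∑ k ∈ range (n+1), Bc ^ k * ((cfam E w n k u : ℝ) : ℂ))
        = ∑ x ∈ range (n+1),
            Bc ^ (x+1) * (((deriv w u : ℝ) : ℂ) * ((cfam E w n x u : ℝ) : ℂ)) := by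
      rw [mul_sum]; exact sum_congr rfl (fun k _ => by ring)
    have hR : (∑ k ∈ range (n+2), Bc ^ k * ((cfam E w (n+1) k u : ℝ) : ℂ))
        = ((∑ x ∈ range n, Bc ^ (x+1) * ((deriv (cfam E w n (x+1)) u : ℝ) : ℂ))
            + (∑ x ∈ range (n+1),
                Bc ^ (x+1) * (((deriv w u : ℝ) : ℂ) * ((cfam E w n x u : ℝ) : ℂ))))
          + ((deriv (cfam E w n 0) u : ℝ) : ℂ) := by
      rw [sum_range_succ' (fun k => Bc ^ k * ((cfam E w (n+1) k u : ℝ) : ℂ)) (n+1)]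
      have : ∀ x ∈ range (n+1), Bc ^ (x+1) * ((cfam E w (n+1) (x+1) u : ℝ) : ℂ)
          = Bc ^ (x+1) * ((deriv (cfam E w n (x+1)) u : ℝ) : ℂ)
            + Bc ^ (x+1) * (((deriv w u : ℝ) : ℂ) * ((cfam E w n x u : ℝ) : ℂ)) := by
        intro x _
        rw [hcs x]
        push_cast
        ring
      rw [sum_congr rfl this, sum_add_distrib,
        sum_range_succ (fun x => Bc ^ (x+1) * ((deriv (cfam E w n (x+1)) u : ℝ) : ℂ)) n,
        hzero, hc0]
      push_cast
      ring
    rw [hR, hT]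
    linear_combination (Complex.exp (Bc * ((w u : ℝ) : ℂ))) * hS2

/-! Good functions: global decay on `[0, ∞)` -/

def GoodFun (σ : ℝ) (f : ℝ → ℝ) : Prop :=
  ∃ h : ℝ → ℝ, ContDiff ℝ (⊤ : ℕ∞) h ∧
    ∀ u, f u = Real.exp (-u) * h (Real.exp (-(2*σ)*u))

theorem hasDerivAt_expinner (σ : ℝ) (x : ℝ) :
    HasDerivAt (fun u => Real.exp (-(2*σ)*u)) (-(2*σ) * Real.exp (-(2*σ)*x)) x := by
  have h1 : HasDerivAt (fun u : ℝ => -(2*σ)*u) (-(2*σ)) x := by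
    simpa using (hasDerivAt_id x).const_mul (-(2*σ))
  simpa [mul_comm] using h1.exp

theorem GoodFun.deriv' {σ : ℝ} {f : ℝ → ℝ} (hf : GoodFun σ f) : GoodFun σ (deriv f) := by
  obtain ⟨h, hh, hfe⟩ := hf
  have hh' : ContDiff ℝ (⊤ : ℕ∞) (deriv h) := (contDiff_infty_iff_deriv.mp hh).2
  refine ⟨fun t => -(h t) + deriv h t * (-(2*σ)*t),
    (hh.neg).add (hh'.mul (contDiff_const.mul contDiff_id)), fun x => ?_⟩
  have hf_eq : f = fun u => Real.exp (-u) * h (Real.exp (-(2*σ)*u)) := funext hfe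
  have hexp : HasDerivAt (fun u : ℝ => Real.exp (-u)) (-Real.exp (-x)) x := by
    simpa using ((hasDerivAt_id x).neg).exp
  have hcomp : HasDerivAt (fun u => h (Real.exp (-(2*σ)*u)))
      (deriv h (Real.exp (-(2*σ)*x)) * (-(2*σ) * Real.exp (-(2*σ)*x))) x :=
    ((hh.differentiable (by simp)).differentiableAt.hasDerivAt).comp x
      (hasDerivAt_expinner σ x)
  have hD := hexp.fun_mul hcomp
  rw [hf_eq, hD.deriv]
  ring

theorem GoodFun.add {σ : ℝ} {f g : ℝ → ℝ} (hf : GoodFun σ f) (hg : GoodFun σ g) :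
    GoodFun σ (f + g) := by
  obtain ⟨h1, hh1, he1⟩ := hf
  obtain ⟨h2, hh2, he2⟩ := hg
  refine ⟨h1 + h2, hh1.add hh2, fun u => ?_⟩
  simp [he1 u, he2 u]
  ring

theorem GoodFun.wmul {σ : ℝ} {f : ℝ → ℝ} (hf : GoodFun σ f) :
    GoodFun σ (fun u => deriv (fun v => Real.exp (-(2*σ)*v)) u * f u) := by
  obtain ⟨h, hh, he⟩ := hf
  refine ⟨fun t => -(2*σ)*t * h t, (contDiff_const.mul contDiff_id).mul hh, fun u => ?_⟩
  have : deriv (fun v => Real.exp (-(2*σ)*v)) u = -(2*σ) * Real.exp (-(2*σ)*u) :=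
    (hasDerivAt_expinner σ u).deriv
  simp only [this, he]
  ring

theorem goodFun_cfam (σ : ℝ) :
    ∀ n k, GoodFun σ (cfam (fun u => Real.exp (-u)) (fun v => Real.exp (-(2*σ)*v)) n k) := by
  intro n
  induction n with
  | zero =>
    intro k
    cases k with
    | zero => exact ⟨fun _ => 1, contDiff_const, fun u => by simp [cfam]⟩
    | succ k => exact ⟨0, contDiff_const, fun u => by simp [cfam]⟩
  | succ n ih =>
    intro k
    cases k with
    | zero => exact (ih 0).deriv'
    | succ k =>
      have h1 := (ih (k+1)).deriv'
      have h2 := (ih k).wmul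
      exact h1.add h2

theorem GoodFun.bound {σ : ℝ} {f : ℝ → ℝ} (hσ : 0 < σ) (hf : GoodFun σ f) :
    ∃ C, 0 ≤ C ∧ ∀ u, 0 ≤ u → |f u| ≤ C * Real.exp (-u) := by
  obtain ⟨h, hh, he⟩ := hf
  obtain ⟨C, hC⟩ := (isCompact_Icc (a := (0:ℝ)) (b := 1)).exists_bound_of_continuousOn
    ((hh.continuous).continuousOn)
  refine ⟨max C 0, le_max_right _ _, fun u hu => ?_⟩
  have hx : Real.exp (-(2*σ)*u) ∈ Set.Icc (0:ℝ) 1 := by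
    constructor
    · exact (Real.exp_pos _).le
    · rw [show (1:ℝ) = Real.exp 0 by simp]
      apply Real.exp_le_exp.mpr
      nlinarith
  rw [he u, abs_mul, abs_of_pos (Real.exp_pos _)]
  have h1 : |h (Real.exp (-(2*σ)*u))| ≤ max C 0 := by
    rw [← Real.norm_eq_abs]; exact le_trans (hC _ hx) (le_max_left _ _)
  nlinarith [Real.exp_pos (-u), abs_nonneg (h (Real.exp (-(2*σ)*u)))]


theorem contDiff_expneg : ContDiff ℝ (⊤ : ℕ∞) (fun u : ℝ => Real.exp (-u)) :=
  Real.contDiff_exp.comp contDiff_neg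

theorem contDiff_expneg2 (σ : ℝ) : ContDiff ℝ (⊤ : ℕ∞) (fun u : ℝ => Real.exp (-(2*σ)*u)) :=
  Real.contDiff_exp.comp (contDiff_const.mul contDiff_id)

theorem norm_cexp_neg_I_mul (B t : ℝ) :
    ‖Complex.exp ((-Complex.I * B) * (t : ℂ))‖ = 1 := by
  rw [Complex.norm_exp]
  have : ((-Complex.I * B) * (t : ℂ)).re = 0 := by
    simp [Complex.mul_re, Complex.mul_im]
  rw [this, Real.exp_zero]

theorem uF_bound (σ : ℝ) (hσ : 0 < σ) (s : ℕ) :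
    ∃ K, 0 ≤ K ∧ ∀ B : ℝ, ∀ n ≤ s, ∀ u, 0 ≤ u →
      ‖iteratedDeriv n (fun x => ((Real.exp (-x) : ℝ) : ℂ) *
          Complex.exp ((-Complex.I * B) * ((Real.exp (-(2*σ)*x) : ℝ) : ℂ))) u‖
        ≤ K * (1+|B|)^s * Real.exp (-u) := by
  have hch : ∀ n k : ℕ, ∃ C, 0 ≤ C ∧ ∀ u, 0 ≤ u →
      |cfam (fun u => Real.exp (-u)) (fun v => Real.exp (-(2*σ)*v)) n k u| ≤ C * Real.exp (-u) :=
    fun n k => GoodFun.bound hσ (goodFun_cfam σ n k)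
  choose Cf hC0 hC1 using hch
  set K0 : ℝ := ∑ n ∈ range (s+1), ∑ k ∈ range (s+1), Cf n k with hK0
  have hK0nn : 0 ≤ K0 := sum_nonneg fun n _ => sum_nonneg fun k _ => hC0 n k
  have hCfK0 : ∀ n k : ℕ, n ≤ s → k ≤ s → Cf n k ≤ K0 := by
    intro n k hn hk
    calc Cf n k ≤ ∑ k ∈ range (s+1), Cf n k :=
          single_le_sum (fun i _ => hC0 n i) (mem_range.mpr (by omega))
      _ ≤ K0 := single_le_sum (f := fun m => ∑ k ∈ range (s+1), Cf m k)
          (fun i _ => sum_nonneg fun j _ => hC0 i j) (mem_range.mpr (by omega))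
  refine ⟨(s+1) * K0, by positivity, fun B n hn u hu => ?_⟩
  rw [iteratedDeriv_mul_cexp contDiff_expneg (contDiff_expneg2 σ) (-Complex.I * B) n u,
    norm_mul, norm_cexp_neg_I_mul, one_mul]
  have hBpow : ∀ k : ℕ, k ≤ s → ‖(-Complex.I * (B:ℂ))‖^k ≤ (1+|B|)^s := by
    intro k hk
    have h1 : ‖(-Complex.I * (B:ℂ))‖ = |B| := by
      simp
    rw [h1]
    calc |B|^k ≤ (1+|B|)^k := pow_le_pow_left₀ (abs_nonneg B) (by linarith [abs_nonneg B]) k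
      _ ≤ (1+|B|)^s := pow_le_pow_right₀ (by linarith [abs_nonneg B]) hk
  calc ‖∑ k ∈ range (n+1), (-Complex.I * B) ^ k *
          ((cfam (fun u => Real.exp (-u)) (fun v => Real.exp (-(2*σ)*v)) n k u : ℝ) : ℂ)‖
      ≤ ∑ k ∈ range (n+1), ‖(-Complex.I * B) ^ k *
          ((cfam (fun u => Real.exp (-u)) (fun v => Real.exp (-(2*σ)*v)) n k u : ℝ) : ℂ)‖ :=
        norm_sum_le _ _
    _ ≤ ∑ _k ∈ range (n+1), (1+|B|)^s * (K0 * Real.exp (-u)) := by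
        apply sum_le_sum
        intro k hk
        rw [norm_mul, norm_pow, Complex.norm_real, Real.norm_eq_abs]
        have hkn : k ≤ n := Nat.lt_succ_iff.mp (mem_range.mp hk)
        have h2 : |cfam (fun u => Real.exp (-u)) (fun v => Real.exp (-(2*σ)*v)) n k u|
            ≤ K0 * Real.exp (-u) := by
          refine le_trans (hC1 n k u hu) ?_
          exact mul_le_mul_of_nonneg_right
            (hCfK0 n k hn (hkn.trans hn)) (Real.exp_pos _).le
        exact mul_le_mul (hBpow k (hkn.trans hn)) h2 (abs_nonneg _) (by positivity)
    _ = (n+1) * ((1+|B|)^s * (K0 * Real.exp (-u))) := by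
        rw [sum_const, card_range, nsmul_eq_mul]; push_cast; ring
    _ ≤ (s+1) * K0 * (1+|B|)^s * Real.exp (-u) := by
        have hs1 : (n:ℝ) + 1 ≤ (s:ℝ) + 1 := by exact_mod_cast Nat.succ_le_succ hn
        have ha : (0:ℝ) ≤ (1+|B|) ^ s * (K0 * Real.exp (-u)) := by positivity
        calc ((n:ℝ)+1) * ((1+|B|) ^ s * (K0 * Real.exp (-u)))
            ≤ ((s:ℝ)+1) * ((1+|B|) ^ s * (K0 * Real.exp (-u))) :=
              mul_le_mul_of_nonneg_right hs1 ha
          _ = ((s:ℝ)+1) * K0 * (1+|B|) ^ s * Real.exp (-u) := by ring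

theorem contDiff_expnegsq : ContDiff ℝ (⊤ : ℕ∞) (fun r : ℝ => Real.exp (-(r^2))) :=
  Real.contDiff_exp.comp ((contDiff_id.pow 2).neg)

theorem contDiff_expnegsq2 (σ : ℝ) :
    ContDiff ℝ (⊤ : ℕ∞) (fun r : ℝ => Real.exp (-(2*σ)*r^2)) :=
  Real.contDiff_exp.comp (contDiff_const.mul (contDiff_id.pow 2))

theorem deriv_w2 (σ : ℝ) (r : ℝ) :
    deriv (fun x : ℝ => Real.exp (-(2*σ)*x^2)) r
      = Real.exp (-(2*σ)*r^2) * (-(2*σ)*(2*r)) := by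
  have h1 : HasDerivAt (fun x : ℝ => -(2*σ)*x^2) (-(2*σ)*(2*r)) r := by
    have := (hasDerivAt_pow 2 r).const_mul (-(2*σ))
    simpa using this
  exact h1.exp.deriv

theorem lower_1d (σ : ℝ) (hσ : 0 < σ) (s : ℕ) (hs : 1 ≤ s) :
    ∃ a, 0 < a ∧ ∃ C, 0 ≤ C ∧ ∀ B : ℝ, ∀ r ∈ Set.Icc (1:ℝ) 2,
      a * |B|^s - C * (1+|B|)^(s-1)
        ≤ ‖iteratedDeriv s (fun x => ((Real.exp (-(x^2)) : ℝ) : ℂ) *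
            Complex.exp ((-Complex.I * B) * ((Real.exp (-(2*σ)*x^2) : ℝ) : ℂ))) r‖ := by
  set E2 : ℝ → ℝ := fun r : ℝ => Real.exp (-(r^2)) with hE2def
  set w2 : ℝ → ℝ := fun r : ℝ => Real.exp (-(2*σ)*r^2) with hw2def
  set a : ℝ := Real.exp (-4) * (4*σ*Real.exp (-(8*σ)))^s with hadef
  have ha : 0 < a := by positivity
  have hM : ∀ k : ℕ, ∃ M, 0 ≤ M ∧ ∀ r ∈ Set.Icc (1:ℝ) 2, |cfam E2 w2 s k r| ≤ M := by
    intro k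
    obtain ⟨M, hM⟩ := (isCompact_Icc (a := (1:ℝ)) (b := 2)).exists_bound_of_continuousOn
      ((cfam_contDiff contDiff_expnegsq (contDiff_expnegsq2 σ) s k).continuous.continuousOn)
    exact ⟨max M 0, le_max_right _ _, fun r hr => le_trans (hM r hr) (le_max_left _ _)⟩
  choose M hM0 hM1 using hM
  refine ⟨a, ha, ∑ k ∈ range s, M k, sum_nonneg fun k _ => hM0 k, fun B r hr => ?_⟩
  rw [iteratedDeriv_mul_cexp contDiff_expnegsq (contDiff_expnegsq2 σ) (-Complex.I * B) s r,
    norm_mul, norm_cexp_neg_I_mul, one_mul]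
  rw [sum_range_succ (fun k => (-Complex.I * (B:ℂ)) ^ k * ((cfam E2 w2 s k r : ℝ) : ℂ)) s]
  set S : ℂ := ∑ k ∈ range s, (-Complex.I * (B:ℂ)) ^ k * ((cfam E2 w2 s k r : ℝ) : ℂ) with hSdef
  set T : ℂ := (-Complex.I * (B:ℂ)) ^ s * ((cfam E2 w2 s s r : ℝ) : ℂ) with hTdef
  have hnormI : ‖(-Complex.I * (B:ℂ))‖ = |B| := by
    simp
  -- lower bound for ‖T‖
  have hT : a * |B|^s ≤ ‖T‖ := by
    rw [hTdef, norm_mul, norm_pow, hnormI, Complex.norm_real, Real.norm_eq_abs]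
    rw [cfam_diag]
    have hr1 : (1:ℝ) ≤ r := hr.1
    have hr2 : r ≤ 2 := hr.2
    have hE2lb : Real.exp (-4) ≤ E2 r := by
      rw [hE2def]
      apply Real.exp_le_exp.mpr
      nlinarith
    have hwlb : 4*σ*Real.exp (-(8*σ)) ≤ |deriv w2 r| := by
      rw [hw2def, deriv_w2 σ r, abs_mul, abs_of_pos (Real.exp_pos _)]
      have h1 : |(-(2*σ)*(2*r))| = 4*σ*r := by
        rw [abs_of_nonpos (by nlinarith)]; ring
      rw [h1]
      have hr4 : r^2 ≤ 4 := by nlinarith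
      have h2 : Real.exp (-(8*σ)) ≤ Real.exp (-(2*σ)*r^2) := by
        apply Real.exp_le_exp.mpr; nlinarith
      nlinarith [mul_nonneg (mul_nonneg (by linarith : (0:ℝ) ≤ 4*σ)
          (Real.exp_pos (-(2*σ)*r^2)).le) (by linarith : (0:ℝ) ≤ r - 1),
        mul_le_mul_of_nonneg_left h2 (by linarith : (0:ℝ) ≤ 4*σ)]
    have hcd : a ≤ |E2 r * (deriv w2 r)^s| := by
      rw [abs_mul, abs_pow, hadef]
      apply mul_le_mul
      · rw [abs_of_pos (Real.exp_pos _)]; exact hE2lb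
      · exact pow_le_pow_left₀ (by positivity) hwlb s
      · positivity
      · exact abs_nonneg _
    calc a * |B|^s ≤ |E2 r * (deriv w2 r)^s| * |B|^s :=
          mul_le_mul_of_nonneg_right hcd (by positivity)
      _ = |B|^s * |E2 r * (deriv w2 r)^s| := by ring
  -- upper bound for ‖S‖
  have hS : ‖S‖ ≤ (∑ k ∈ range s, M k) * (1+|B|)^(s-1) := by
    rw [hSdef]
    calc ‖∑ k ∈ range s, (-Complex.I * (B:ℂ)) ^ k * ((cfam E2 w2 s k r : ℝ) : ℂ)‖
        ≤ ∑ k ∈ range s, ‖(-Complex.I * (B:ℂ)) ^ k * ((cfam E2 w2 s k r : ℝ) : ℂ)‖ :=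
          norm_sum_le _ _
      _ ≤ ∑ k ∈ range s, M k * (1+|B|)^(s-1) := by
          apply sum_le_sum
          intro k hk
          rw [norm_mul, norm_pow, hnormI, Complex.norm_real, Real.norm_eq_abs]
          have hks : k ≤ s - 1 := by
            have := mem_range.mp hk; omega
          have hBk : |B|^k ≤ (1+|B|)^(s-1) :=
            le_trans (pow_le_pow_left₀ (abs_nonneg B) (by linarith [abs_nonneg B]) k)
              (pow_le_pow_right₀ (by linarith [abs_nonneg B]) hks)
          calc |B|^k * |cfam E2 w2 s k r| ≤ (1+|B|)^(s-1) * M k :=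
                mul_le_mul hBk (hM1 k r hr) (abs_nonneg _) (by positivity)
            _ = M k * (1+|B|)^(s-1) := by ring
      _ = (∑ k ∈ range s, M k) * (1+|B|)^(s-1) := by rw [← sum_mul]
  have htri : ‖T‖ - ‖S‖ ≤ ‖S + T‖ := by
    have h := norm_sub_le (S + T) S
    have h2 : S + T - S = T := by ring
    rw [h2] at h
    linarith
  linarith

section InnerSpace

variable {V : Type*} [NormedAddCommGroup V] [InnerProductSpace ℝ V]

theorem itid1 (x : V) : ‖iteratedFDeriv ℝ 1 (fun y : V => y) x‖ ≤ 1 := by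
  rw [show (1:ℕ) = 0 + 1 from rfl, ← norm_iteratedFDeriv_fderiv, norm_iteratedFDeriv_zero]
  rw [fderiv_id']
  exact ContinuousLinearMap.norm_id_le

theorem itid_ge2 (x : V) (i : ℕ) (hi : 2 ≤ i) :
    ‖iteratedFDeriv ℝ i (fun y : V => y) x‖ = 0 := by
  obtain ⟨k, rfl⟩ : ∃ k, i = k + 1 + 1 := ⟨i - 2, by omega⟩
  rw [← norm_iteratedFDeriv_fderiv]
  have : (fderiv ℝ (fun y : V => y)) = fun _ : V => ContinuousLinearMap.id ℝ V :=
    funext fun y => fderiv_id'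
  rw [this, iteratedFDeriv_const_of_ne (by omega : k + 1 ≠ 0)]
  simp

theorem itid_le (x : V) (i : ℕ) :
    ‖iteratedFDeriv ℝ i (fun y : V => y) x‖ ≤ 1 + ‖x‖ := by
  match i with
  | 0 => rw [norm_iteratedFDeriv_zero]; linarith [norm_nonneg x]
  | 1 => linarith [itid1 x, norm_nonneg x]
  | (k+2) => rw [itid_ge2 x (k+2) (by omega)]; positivity

theorem norm_iteratedFDeriv_nsq_le (x : V) (n : ℕ) (hn : 1 ≤ n) :
    ‖iteratedFDeriv ℝ n (fun y : V => ‖y‖^2) x‖ ≤ (2+2*‖x‖)^n := by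
  set B2 : V →L[ℝ] V →L[ℝ] ℝ :=
    (isBoundedBilinearMap_inner (𝕜 := ℝ) (E := V)).toContinuousLinearMap with hB2
  have hB2norm : ‖B2‖ ≤ 1 := by
    apply ContinuousLinearMap.opNorm_le_bound _ zero_le_one
    intro z
    rw [one_mul]
    apply ContinuousLinearMap.opNorm_le_bound _ (norm_norm z ▸ norm_nonneg z)
    intro y
    exact (norm_inner_le_norm (𝕜 := ℝ) z y)
  have hnsq_eq : (fun y : V => ‖y‖^2) = fun y => B2 y y :=
    funext fun y => (real_inner_self_eq_norm_sq y).symm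
  rw [hnsq_eq]
  refine le_trans (B2.norm_iteratedFDeriv_le_of_bilinear (N := (⊤:ℕ∞))
    contDiff_id contDiff_id x (mod_cast le_top)) ?_
  have hsum : ∑ i ∈ range (n + 1), (n.choose i : ℝ)
        * ‖iteratedFDeriv ℝ i (fun y : V => y) x‖
        * ‖iteratedFDeriv ℝ (n - i) (fun y : V => y) x‖ ≤ (2+2*‖x‖)^n := by
    match n, hn with
    | 1, _ =>
      rw [sum_range_succ, sum_range_succ, sum_range_zero]
      norm_num
      have h0 := norm_iteratedFDeriv_zero (𝕜 := ℝ) (f := fun y : V => y) (x := x)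
      nlinarith [itid1 x, norm_nonneg x, norm_nonneg (iteratedFDeriv ℝ 0 (fun y : V => y) x),
        norm_nonneg (iteratedFDeriv ℝ 1 (fun y : V => y) x), h0,
        (itid1 x : ‖iteratedFDeriv ℝ (1 - 0) (fun y : V => y) x‖ ≤ 1),
        (h0 : ‖iteratedFDeriv ℝ (1 - 1) (fun y : V => y) x‖ = ‖x‖),
        (ContinuousLinearMap.norm_id_le : ‖ContinuousLinearMap.id ℝ V‖ ≤ 1)]
    | (m+2), _ =>
      calc ∑ i ∈ range (m+2+1), ((m+2).choose i : ℝ)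
            * ‖iteratedFDeriv ℝ i (fun y : V => y) x‖
            * ‖iteratedFDeriv ℝ (m+2-i) (fun y : V => y) x‖
          ≤ ∑ i ∈ range (m+2+1), ((m+2).choose i : ℝ) * ((1+‖x‖) * (1+‖x‖)) := by
            apply sum_le_sum
            intro i _
            have h1 := itid_le x i
            have h2 := itid_le x (m+2-i)
            have hc : (0:ℝ) ≤ ((m+2).choose i : ℝ) := by positivity
            rw [mul_assoc]
            apply mul_le_mul_of_nonneg_left _ hc
            exact mul_le_mul h1 h2 (norm_nonneg _) (by positivity)
        _ = (2:ℝ)^(m+2) * ((1+‖x‖) * (1+‖x‖)) := by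
            rw [← sum_mul]
            congr 1
            have := Nat.sum_range_choose (m+2)
            exact_mod_cast congrArg (Nat.cast (R := ℝ)) this
        _ ≤ (2:ℝ)^(m+2) * (1+‖x‖)^(m+2) := by
            apply mul_le_mul_of_nonneg_left _ (by positivity)
            have : (1+‖x‖) * (1+‖x‖) = (1+‖x‖)^2 := by ring
            rw [this]
            exact pow_le_pow_right₀ (by linarith [norm_nonneg x]) (by omega)
        _ = (2+2*‖x‖)^(m+2) := by rw [← mul_pow]; ring_nf
  calc ‖B2‖ * ∑ i ∈ range (n + 1), (n.choose i : ℝ)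
        * ‖iteratedFDeriv ℝ i (fun y : V => y) x‖
        * ‖iteratedFDeriv ℝ (n - i) (fun y : V => y) x‖
      ≤ 1 * ((2+2*‖x‖)^n) := by
        apply mul_le_mul hB2norm hsum _ zero_le_one
        apply sum_nonneg
        intro i _
        positivity
    _ = (2+2*‖x‖)^n := one_mul _

end InnerSpace

noncomputable def Ffun (σ B : ℝ) : ℝ → ℂ := fun u =>
  ((Real.exp (-u) : ℝ) : ℂ) * Complex.exp ((-Complex.I * B) * ((Real.exp (-(2*σ)*u) : ℝ) : ℂ))

theorem contDiff_Ffun (σ B : ℝ) : ContDiff ℝ (⊤ : ℕ∞) (Ffun σ B) := by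
  apply ContDiff.mul
  · exact Complex.ofRealCLM.contDiff.comp contDiff_expneg
  · exact Complex.contDiff_exp.comp
      (contDiff_const.mul (Complex.ofRealCLM.contDiff.comp (contDiff_expneg2 σ)))

section InnerSpace2

variable {V : Type*} [NormedAddCommGroup V] [InnerProductSpace ℝ V]

theorem contDiff_phi0 (σ B : ℝ) : ContDiff ℝ (⊤ : ℕ∞) (fun z : V => Ffun σ B (‖z‖^2)) :=
  (contDiff_Ffun σ B).comp (contDiff_norm_sq ℝ)

theorem phi0_bound (σ : ℝ) (hσ : 0 < σ) (s : ℕ) :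
    ∃ K', 0 ≤ K' ∧ ∀ B : ℝ, ∀ y : V,
      ‖iteratedFDeriv ℝ s (fun z : V => Ffun σ B (‖z‖^2)) y‖
        ≤ K' * (1+|B|)^s * Real.exp (-‖y‖^2) * (2+2*‖y‖)^s := by
  obtain ⟨K, hK0, hKb⟩ := uF_bound σ hσ s
  refine ⟨(s : ℕ).factorial * K, by positivity, fun B y => ?_⟩
  have hcomp : ‖iteratedFDeriv ℝ s ((Ffun σ B) ∘ (fun z : V => ‖z‖^2)) y‖
      ≤ (s : ℕ).factorial * (K * (1+|B|)^s * Real.exp (-‖y‖^2)) * (2+2*‖y‖)^s := by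
    apply norm_iteratedFDeriv_comp_le (contDiff_Ffun σ B) (contDiff_norm_sq ℝ)
      (mod_cast le_top) y
    · intro i hi
      rw [norm_iteratedFDeriv_eq_norm_iteratedDeriv]
      have := hKb B i hi (‖y‖^2) (by positivity)
      exact this
    · intro i hi1 his
      calc ‖iteratedFDeriv ℝ i (fun z : V => ‖z‖^2) y‖ ≤ (2+2*‖y‖)^i :=
            norm_iteratedFDeriv_nsq_le y i hi1
        _ = (2+2*‖y‖)^i := rfl
  calc ‖iteratedFDeriv ℝ s (fun z : V => Ffun σ B (‖z‖^2)) y‖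
      = ‖iteratedFDeriv ℝ s ((Ffun σ B) ∘ (fun z : V => ‖z‖^2)) y‖ := rfl
    _ ≤ (s : ℕ).factorial * (K * (1+|B|)^s * Real.exp (-‖y‖^2)) * (2+2*‖y‖)^s := hcomp
    _ = (s : ℕ).factorial * K * (1+|B|)^s * Real.exp (-‖y‖^2) * (2+2*‖y‖)^s := by ring

theorem phi0_lower (σ : ℝ) (hσ : 0 < σ) (s : ℕ) (hs : 1 ≤ s) :
    ∃ a, 0 < a ∧ ∃ C, 0 ≤ C ∧ ∀ B : ℝ, ∀ y : V, ‖y‖ ∈ Set.Icc (1:ℝ) 2 →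
      a * |B|^s - C * (1+|B|)^(s-1)
        ≤ ‖iteratedFDeriv ℝ s (fun z : V => Ffun σ B (‖z‖^2)) y‖ := by
  obtain ⟨a, ha, C, hC, hlow⟩ := lower_1d σ hσ s hs
  refine ⟨a, ha, C, hC, fun B y hy => ?_⟩
  have hr1 : (1:ℝ) ≤ ‖y‖ := hy.1
  have hrne : ‖y‖ ≠ 0 := by positivity
  set v : V := ‖y‖⁻¹ • y with hv
  have hvnorm : ‖v‖ = 1 := by
    rw [hv, norm_smul, norm_inv, norm_norm, inv_mul_cancel₀ hrne]
  set L : ℝ →L[ℝ] V := ContinuousLinearMap.toSpanSingleton ℝ v with hL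
  have hLr : L ‖y‖ = y := by
    rw [hL, ContinuousLinearMap.toSpanSingleton_apply, hv, smul_smul,
      mul_inv_cancel₀ hrne, one_smul]
  have hL1 : L 1 = v := by
    rw [hL, ContinuousLinearMap.toSpanSingleton_apply, one_smul]
  have hkey : (fun x : ℝ => ((Real.exp (-(x^2)) : ℝ) : ℂ) *
        Complex.exp ((-Complex.I * B) * ((Real.exp (-(2*σ)*x^2) : ℝ) : ℂ)))
      = (fun z : V => Ffun σ B (‖z‖^2)) ∘ L := by
    funext t
    have : ‖L t‖^2 = t^2 := by
      rw [hL, ContinuousLinearMap.toSpanSingleton_apply, norm_smul, hvnorm, mul_one,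
        Real.norm_eq_abs, sq_abs]
    simp only [Function.comp_apply, this, Ffun]
  have hchain : iteratedDeriv s (fun x : ℝ => ((Real.exp (-(x^2)) : ℝ) : ℂ) *
        Complex.exp ((-Complex.I * B) * ((Real.exp (-(2*σ)*x^2) : ℝ) : ℂ))) ‖y‖
      = (iteratedFDeriv ℝ s (fun z : V => Ffun σ B (‖z‖^2)) y) (fun _ => v) := by
    rw [hkey, iteratedDeriv_eq_iteratedFDeriv,
      ContinuousLinearMap.iteratedFDeriv_comp_right L (contDiff_phi0 σ B) _ (mod_cast le_top),
      ContinuousMultilinearMap.compContinuousLinearMap_apply, hLr]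
    congr 1
    funext i
    exact hL1
  have happ : ‖(iteratedFDeriv ℝ s (fun z : V => Ffun σ B (‖z‖^2)) y) (fun _ => v)‖
      ≤ ‖iteratedFDeriv ℝ s (fun z : V => Ffun σ B (‖z‖^2)) y‖ := by
    refine le_trans (ContinuousMultilinearMap.le_opNorm _ _) ?_
    rw [show (∏ _i : Fin s, ‖v‖) = 1 by simp [hvnorm]]
    rw [mul_one]
  calc a * |B|^s - C * (1+|B|)^(s-1)
      ≤ ‖iteratedDeriv s (fun x : ℝ => ((Real.exp (-(x^2)) : ℝ) : ℂ) *
          Complex.exp ((-Complex.I * B) * ((Real.exp (-(2*σ)*x^2) : ℝ) : ℂ))) ‖y‖‖ :=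
        hlow B ‖y‖ hy
    _ = ‖(iteratedFDeriv ℝ s (fun z : V => Ffun σ B (‖z‖^2)) y) (fun _ => v)‖ := by
        rw [hchain]
    _ ≤ _ := happ

end InnerSpace2

theorem poly_gauss (s : ℕ) (hs : 1 ≤ s) (t : ℝ) (ht : 0 ≤ t) :
    ((2+2*t)^s * Real.exp (-t^2))^2 ≤ 8^s * (1+2*(s:ℝ))^s * Real.exp (-t^2) := by
  have hsR : (1:ℝ) ≤ (s:ℝ) := by exact_mod_cast hs
  have h1 : (2+2*t)^2 ≤ 8*(1+t^2) := by nlinarith [sq_nonneg (t-1)]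
  have h2 : ((2+2*t)^s)^2 = ((2+2*t)^2)^s := by rw [← pow_mul, ← pow_mul, Nat.mul_comm s 2]
  have h3 : ((2+2*t)^2)^s ≤ (8*(1+t^2))^s := pow_le_pow_left₀ (by positivity) h1 s
  have h4 : (1+t^2) ≤ (1+2*(s:ℝ)) * Real.exp (t^2/(2*s)) := by
    have he : t^2/(2*s) + 1 ≤ Real.exp (t^2/(2*s)) := Real.add_one_le_exp _
    have hd : 0 ≤ t^2/(2*s) := by positivity
    have hx2 : 2*(s:ℝ)*(t^2/(2*(s:ℝ))) = t^2 := by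
      field_simp
    nlinarith [mul_le_mul_of_nonneg_left he (show (0:ℝ) ≤ 1+2*(s:ℝ) by linarith), hx2, hd]
  have h5 : (1+t^2)^s ≤ (1+2*(s:ℝ))^s * Real.exp (t^2/2) := by
    calc (1+t^2)^s ≤ ((1+2*(s:ℝ)) * Real.exp (t^2/(2*s)))^s :=
          pow_le_pow_left₀ (by positivity) h4 s
      _ = (1+2*(s:ℝ))^s * (Real.exp (t^2/(2*s)))^s := mul_pow _ _ _
      _ = (1+2*(s:ℝ))^s * Real.exp (t^2/2) := by
          congr 1
          rw [← Real.exp_nat_mul]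
          congr 1
          field_simp
  have hexpsq : (Real.exp (-t^2))^2 = Real.exp (-(2*t^2)) := by
    rw [← Real.exp_nat_mul]; congr 1; push_cast; ring
  calc ((2+2*t)^s * Real.exp (-t^2))^2
      = ((2+2*t)^s)^2 * (Real.exp (-t^2))^2 := by ring
    _ ≤ (8*(1+t^2))^s * (Real.exp (-t^2))^2 := by
        apply mul_le_mul_of_nonneg_right (le_trans (le_of_eq h2) h3) (by positivity)
    _ = 8^s * (1+t^2)^s * Real.exp (-(2*t^2)) := by rw [mul_pow, hexpsq]
    _ ≤ 8^s * ((1+2*(s:ℝ))^s * Real.exp (t^2/2)) * Real.exp (-(2*t^2)) := by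
        apply mul_le_mul_of_nonneg_right _ (by positivity)
        exact mul_le_mul_of_nonneg_left h5 (by positivity)
    _ = 8^s * (1+2*(s:ℝ))^s * Real.exp (t^2/2 + -(2*t^2)) := by
        rw [Real.exp_add]; ring
    _ ≤ 8^s * (1+2*(s:ℝ))^s * Real.exp (-t^2) := by
        apply mul_le_mul_of_nonneg_left _ (by positivity)
        apply Real.exp_le_exp.mpr
        nlinarith [sq_nonneg t]

theorem integrable_expneg_norm_sq (d : ℕ) :
    MeasureTheory.Integrable (fun v : EuclideanSpace ℝ (Fin d) => Real.exp (-‖v‖^2)) := by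
  have h := (GaussianFourier.integrable_cexp_neg_mul_sq_norm_add (V := EuclideanSpace ℝ (Fin d))
    (b := (1:ℂ)) (by norm_num) 0 0).norm
  apply h.congr
  filter_upwards with v
  rw [Complex.norm_exp]
  congr 1
  simp [← Complex.ofReal_pow]

theorem phi0_sq_integrable (d : ℕ) (σ : ℝ) (hσ : 0 < σ) (s : ℕ) (hs : 1 ≤ s) (B : ℝ) :
    MeasureTheory.Integrable (fun y : EuclideanSpace ℝ (Fin d) =>
      ‖iteratedFDeriv ℝ s (fun z : EuclideanSpace ℝ (Fin d) => Ffun σ B (‖z‖^2)) y‖^2) := by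
  obtain ⟨K', hK'0, hK'b⟩ := phi0_bound (V := EuclideanSpace ℝ (Fin d)) σ hσ s
  set Ctot : ℝ := (K' * (1+|B|)^s)^2 * (8^s * (1+2*(s:ℝ))^s) with hCtot
  have hCtot0 : 0 ≤ Ctot := by positivity
  apply MeasureTheory.Integrable.mono' ((integrable_expneg_norm_sq d).const_mul Ctot)
  · apply Continuous.aestronglyMeasurable
    exact (((contDiff_phi0 σ B).continuous_iteratedFDeriv (mod_cast le_top)).norm).pow 2
  · filter_upwards with y
    rw [Real.norm_eq_abs, abs_of_nonneg (by positivity)]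
    have hb := hK'b B y
    have h1 : ‖iteratedFDeriv ℝ s (fun z : EuclideanSpace ℝ (Fin d) => Ffun σ B (‖z‖^2)) y‖^2
        ≤ (K' * (1+|B|)^s)^2 * ((2+2*‖y‖)^s * Real.exp (-‖y‖^2))^2 := by
      have h2 : ‖iteratedFDeriv ℝ s (fun z : EuclideanSpace ℝ (Fin d) => Ffun σ B (‖z‖^2)) y‖
          ≤ (K' * (1+|B|)^s) * ((2+2*‖y‖)^s * Real.exp (-‖y‖^2)) := by
        calc ‖iteratedFDeriv ℝ s (fun z : EuclideanSpace ℝ (Fin d) => Ffun σ B (‖z‖^2)) y‖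
            ≤ K' * (1+|B|)^s * Real.exp (-‖y‖^2) * (2+2*‖y‖)^s := hb
          _ = (K' * (1+|B|)^s) * ((2+2*‖y‖)^s * Real.exp (-‖y‖^2)) := by ring
      calc ‖iteratedFDeriv ℝ s (fun z : EuclideanSpace ℝ (Fin d) => Ffun σ B (‖z‖^2)) y‖^2
          ≤ ((K' * (1+|B|)^s) * ((2+2*‖y‖)^s * Real.exp (-‖y‖^2)))^2 :=
            pow_le_pow_left₀ (norm_nonneg _) h2 2
        _ = (K' * (1+|B|)^s)^2 * ((2+2*‖y‖)^s * Real.exp (-‖y‖^2))^2 := by ring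
    calc ‖iteratedFDeriv ℝ s (fun z : EuclideanSpace ℝ (Fin d) => Ffun σ B (‖z‖^2)) y‖^2
        ≤ (K' * (1+|B|)^s)^2 * ((2+2*‖y‖)^s * Real.exp (-‖y‖^2))^2 := h1
      _ ≤ (K' * (1+|B|)^s)^2 * (8^s * (1+2*(s:ℝ))^s * Real.exp (-‖y‖^2)) := by
          apply mul_le_mul_of_nonneg_left _ (by positivity)
          exact poly_gauss s hs ‖y‖ (norm_nonneg y)
      _ = Ctot * Real.exp (-‖y‖^2) := by rw [hCtot]; ring

theorem poly_dominate (s : ℕ) (hs : 1 ≤ s) (a C : ℝ) (ha : 0 < a) (hC : 0 ≤ C) :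
    ∃ K, 0 < K ∧ ∀ x : ℝ, 0 ≤ x → C * (1+x)^(s-1) ≤ a/2 * x^s + K := by
  set R : ℝ := max 1 (2*C*2^(s-1)/a) with hR
  have hR1 : (1:ℝ) ≤ R := le_max_left _ _
  have hR2 : 2*C*2^(s-1)/a ≤ R := le_max_right _ _
  refine ⟨C * (1+R)^(s-1) + 1, by positivity, fun x hx => ?_⟩
  rcases le_or_gt x R with h | h
  · have : C * (1+x)^(s-1) ≤ C * (1+R)^(s-1) := by
      apply mul_le_mul_of_nonneg_left _ hC
      exact pow_le_pow_left₀ (by linarith) (by linarith) _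
    nlinarith [pow_nonneg hx s]
  · have hx1 : (1:ℝ) ≤ x := le_trans hR1 h.le
    have h1 : (1+x)^(s-1) ≤ (2*x)^(s-1) := pow_le_pow_left₀ (by linarith) (by linarith) _
    have h2 : (2*x)^(s-1) = 2^(s-1) * x^(s-1) := mul_pow _ _ _
    have h3 : x^(s-1) * R ≤ x^s := by
      have hxs : x^(s-1) * x = x^s := by
        rw [← pow_succ]
        congr 1
        omega
      calc x^(s-1) * R ≤ x^(s-1) * x := by
            apply mul_le_mul_of_nonneg_left h.le (by positivity)
        _ = x^s := hxs
    have hxp : (0:ℝ) ≤ x^(s-1) := by positivity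
    have key : C * 2^(s-1) ≤ a/2 * x := by
      have heq : a/2 * (2*C*2^(s-1)/a) = C*2^(s-1) := by field_simp
      calc C*2^(s-1) = a/2 * (2*C*2^(s-1)/a) := heq.symm
        _ ≤ a/2 * R := mul_le_mul_of_nonneg_left hR2 (by linarith)
        _ ≤ a/2 * x := mul_le_mul_of_nonneg_left h.le (by linarith)
    have hxs : x * x^(s-1) = x^s := by
      rw [mul_comm, ← pow_succ]
      congr 1
      omega
    have h4 : C * (2^(s-1) * x^(s-1)) ≤ a/2 * x^s := by
      calc C * (2^(s-1) * x^(s-1)) = (C*2^(s-1)) * x^(s-1) := by ring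
        _ ≤ (a/2*x) * x^(s-1) := mul_le_mul_of_nonneg_right key hxp
        _ = a/2 * (x * x^(s-1)) := by ring
        _ = a/2 * x^s := by rw [hxs]
    have hnn : (0:ℝ) ≤ C * (1+R)^(s-1) + 1 := by positivity
    calc C * (1+x)^(s-1) ≤ C * (2^(s-1) * x^(s-1)) := by
          rw [← h2]; exact mul_le_mul_of_nonneg_left h1 hC
      _ ≤ a/2 * x^s := h4
      _ ≤ a/2 * x^s + (C * (1+R)^(s-1) + 1) := by linarith

end GaussianAux

open MeasureTheory

theorem gaussian_ode_solution_lower_bound (d : ℕ) (hd : 1 ≤ d) (σ lam : ℝ)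
    (hσ : 0 < σ) (hlam : lam ≠ 0) (s : ℕ) (hs : 1 ≤ s) :
    ∃ c > (0 : ℝ), ∃ C > (0 : ℝ), ∀ κ ∈ Set.Ioc (0 : ℝ) 1, ∀ ε > (0 : ℝ), ∀ τ ≥ (0 : ℝ),
      c * κ ^ (1 + 2 * σ * (s : ℝ)) * (τ / ε) ^ s - C * κ
      ≤ Real.sqrt (∫ y : EuclideanSpace ℝ (Fin d),
          ‖iteratedFDeriv ℝ s (fun z : EuclideanSpace ℝ (Fin d) =>
            ((κ * Real.exp (-‖z‖ ^ 2) : ℝ) : ℂ) *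
              Complex.exp (-Complex.I * (lam : ℂ) * ((τ / ε : ℝ) : ℂ)
                * ((κ ^ (2 * σ) * Real.exp (-‖z‖ ^ 2) ^ (2 * σ) : ℝ) : ℂ))) y‖ ^ 2) := by
  obtain ⟨a, ha, C, hC, hlow⟩ :=
    GaussianAux.phi0_lower (V := EuclideanSpace ℝ (Fin d)) σ hσ s hs
  obtain ⟨K2, hK2, hdom⟩ := GaussianAux.poly_dominate s hs a C ha hC
  set y₀ : EuclideanSpace ℝ (Fin d) := EuclideanSpace.single (⟨0, by omega⟩ : Fin d) (3/2 : ℝ)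
    with hy₀def
  have hy₀ : ‖y₀‖ = 3/2 := by
    rw [hy₀def, EuclideanSpace.norm_single, Real.norm_eq_abs]
    norm_num
  set S : Set (EuclideanSpace ℝ (Fin d)) := Metric.closedBall y₀ (1/4) with hSdef
  have hSfin : volume S < ⊤ := measure_closedBall_lt_top
  have hSpos : 0 < volume S := Metric.measure_closedBall_pos volume y₀ (by norm_num)
  set V0 : ℝ := (volume S).toReal with hV0def
  have hV0 : 0 < V0 := ENNReal.toReal_pos hSpos.ne' hSfin.ne
  have hlampos : 0 < |lam| := abs_pos.mpr hlam
  refine ⟨Real.sqrt V0 * (a/2) * |lam|^s, by positivity, Real.sqrt V0 * K2, by positivity,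
    fun κ hκ ε hε τ hτ => ?_⟩
  obtain ⟨hκ0, hκ1⟩ := hκ
  set P : ℝ := κ ^ (2*σ) with hP
  have hPpos : 0 < P := Real.rpow_pos_of_pos hκ0 _
  set B : ℝ := lam * (τ/ε) * P with hB
  -- rewrite the function
  have hfun : (fun z : EuclideanSpace ℝ (Fin d) =>
        ((κ * Real.exp (-‖z‖ ^ 2) : ℝ) : ℂ) *
          Complex.exp (-Complex.I * (lam : ℂ) * ((τ / ε : ℝ) : ℂ)
            * ((κ ^ (2 * σ) * Real.exp (-‖z‖ ^ 2) ^ (2 * σ) : ℝ) : ℂ)))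
      = fun z : EuclideanSpace ℝ (Fin d) => κ • (GaussianAux.Ffun σ B (‖z‖^2)) := by
    funext z
    have hrw : Real.exp (-‖z‖^2) ^ (2*σ) = Real.exp (-(2*σ)*‖z‖^2) := by
      rw [← Real.exp_mul]
      ring_nf
    have hBc : (B : ℂ) = (lam : ℂ) * ((τ/ε : ℝ) : ℂ) * (P : ℂ) := by
      rw [hB]; push_cast; ring
    simp only [GaussianAux.Ffun, hrw, Complex.ofReal_mul, Complex.real_smul]
    have harg : -Complex.I * (lam : ℂ) * ((τ/ε : ℝ) : ℂ)
          * ((P : ℂ) * ((Real.exp (-(2*σ)*‖z‖^2) : ℝ) : ℂ))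
        = -Complex.I * (B : ℂ) * ((Real.exp (-(2*σ)*‖z‖^2) : ℝ) : ℂ) := by
      rw [hBc]; ring
    rw [harg]
    ring
  rw [hfun]
  -- smul identity
  have hsm : ∀ y : EuclideanSpace ℝ (Fin d),
      ‖iteratedFDeriv ℝ s (fun z : EuclideanSpace ℝ (Fin d) =>
          κ • (GaussianAux.Ffun σ B (‖z‖^2))) y‖
        = κ * ‖iteratedFDeriv ℝ s (fun z : EuclideanSpace ℝ (Fin d) =>
            GaussianAux.Ffun σ B (‖z‖^2)) y‖ := by
    intro y
    rw [iteratedFDeriv_const_smul_apply'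
      ((GaussianAux.contDiff_phi0 σ B).of_le
        (by exact_mod_cast le_top : ((s:ℕ) : WithTop ℕ∞) ≤ ((⊤ : ℕ∞) : WithTop ℕ∞))).contDiffAt,
      norm_smul, Real.norm_eq_abs, abs_of_pos hκ0]
  have hInt : Integrable (fun y : EuclideanSpace ℝ (Fin d) =>
      ‖iteratedFDeriv ℝ s (fun z : EuclideanSpace ℝ (Fin d) =>
        κ • (GaussianAux.Ffun σ B (‖z‖^2))) y‖^2) := by
    apply (((GaussianAux.phi0_sq_integrable d σ hσ s hs B).const_mul (κ^2))).congr
    filter_upwards with y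
    rw [hsm y]
    ring
  set m' : ℝ := max (a * |B|^s - C * (1+|B|)^(s-1)) 0 with hm'def
  have hm'0 : 0 ≤ m' := le_max_right _ _
  have hm' : a * |B|^s - C * (1+|B|)^(s-1) ≤ m' := le_max_left _ _
  -- pointwise lower bound on S
  have hpt : ∀ y ∈ S, (κ * m')^2 ≤
      ‖iteratedFDeriv ℝ s (fun z : EuclideanSpace ℝ (Fin d) =>
        κ • (GaussianAux.Ffun σ B (‖z‖^2))) y‖^2 := by
    intro y hy
    have hdist : dist y y₀ ≤ 1/4 := Metric.mem_closedBall.mp hy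
    have hnn : |‖y‖ - ‖y₀‖| ≤ 1/4 := le_trans (abs_norm_sub_norm_le y y₀)
      (by rw [← dist_eq_norm]; exact hdist)
    have hyIcc : ‖y‖ ∈ Set.Icc (1:ℝ) 2 := by
      rw [hy₀] at hnn
      constructor <;> [linarith [abs_le.mp hnn]; linarith [abs_le.mp hnn]]
    have h1 : m' ≤ ‖iteratedFDeriv ℝ s (fun z : EuclideanSpace ℝ (Fin d) =>
        GaussianAux.Ffun σ B (‖z‖^2)) y‖ :=
      max_le (hlow B y hyIcc) (norm_nonneg _)
    have h2 : κ * m' ≤ ‖iteratedFDeriv ℝ s (fun z : EuclideanSpace ℝ (Fin d) =>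
        κ • (GaussianAux.Ffun σ B (‖z‖^2))) y‖ := by
      rw [hsm y]
      exact mul_le_mul_of_nonneg_left h1 hκ0.le
    exact pow_le_pow_left₀ (by positivity) h2 2
  have hlo : (κ * m')^2 * V0 ≤ ∫ y in S,
      ‖iteratedFDeriv ℝ s (fun z : EuclideanSpace ℝ (Fin d) =>
        κ • (GaussianAux.Ffun σ B (‖z‖^2))) y‖^2 :=
    by have := setIntegral_ge_of_const_le Metric.isClosed_closedBall.measurableSet hSfin.ne hpt
         hInt.integrableOn
       rw [smul_eq_mul, mul_comm] at this
       exact this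
  have hle : (∫ y in S, ‖iteratedFDeriv ℝ s (fun z : EuclideanSpace ℝ (Fin d) =>
        κ • (GaussianAux.Ffun σ B (‖z‖^2))) y‖^2)
      ≤ ∫ y : EuclideanSpace ℝ (Fin d),
        ‖iteratedFDeriv ℝ s (fun z : EuclideanSpace ℝ (Fin d) =>
          κ • (GaussianAux.Ffun σ B (‖z‖^2))) y‖^2 :=
    setIntegral_le_integral hInt (Filter.Eventually.of_forall fun y => by positivity)
  have hsqrt : κ * m' * Real.sqrt V0 ≤ Real.sqrt (∫ y : EuclideanSpace ℝ (Fin d),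
      ‖iteratedFDeriv ℝ s (fun z : EuclideanSpace ℝ (Fin d) =>
        κ • (GaussianAux.Ffun σ B (‖z‖^2))) y‖^2) := by
    have := Real.sqrt_le_sqrt (le_trans hlo hle)
    rwa [Real.sqrt_mul (sq_nonneg _), Real.sqrt_sq (by positivity)] at this
  -- algebra
  have hBabs : |B| = |lam| * (τ/ε) * P := by
    rw [hB, abs_mul, abs_mul, abs_of_nonneg (div_nonneg hτ hε.le), abs_of_pos hPpos]
  have hBs : |B|^s = |lam|^s * (τ/ε)^s * P^s := by
    rw [hBabs, mul_pow, mul_pow]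
  have hκP : κ ^ ((1:ℝ) + 2*σ*(s:ℝ)) = κ * P^s := by
    rw [Real.rpow_add hκ0, Real.rpow_one]
    congr 1
    rw [hP, ← Real.rpow_natCast (κ ^ (2*σ)) s, ← Real.rpow_mul hκ0.le]
  have heq : Real.sqrt V0 * (a/2) * |lam|^s * κ ^ ((1:ℝ) + 2*σ*(s:ℝ)) * (τ/ε)^s
      - Real.sqrt V0 * K2 * κ
      = Real.sqrt V0 * κ * ((a/2) * |B|^s - K2) := by
    rw [hκP, hBs]
    ring
  have hstep2 : (a/2) * |B|^s - K2 ≤ a * |B|^s - C * (1+|B|)^(s-1) := by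
    have := hdom |B| (abs_nonneg B)
    linarith
  calc Real.sqrt V0 * (a/2) * |lam|^s * κ ^ (1 + 2*σ*(s:ℝ)) * (τ/ε)^s
        - Real.sqrt V0 * K2 * κ
      = Real.sqrt V0 * κ * ((a/2) * |B|^s - K2) := heq
    _ ≤ Real.sqrt V0 * κ * m' := by
        apply mul_le_mul_of_nonneg_left (le_trans hstep2 hm') (by positivity)
    _ = κ * m' * Real.sqrt V0 := by ring
    _ ≤ _ := hsqrt
end
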